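/- arXiv:2010.06802 — 3 statements merged into one kernel-verified Lean document; each statement's English description precedes it below -/
import Mathlib

section
/- For each j = 1,…,d, let p_j, q_j : [0,1] → ℝ be positive and continuously differentiable with p_j'(x)q_j(x) − p_j(x)q_j'(x) > 0 for all x ∈ [0,1]. Then there exist constants 0 < a ≤ b such that a·2^{|l|} ≤ η_{l,i} ≤ b·2^{|l|} for all multi-indices l ∈ ℕ_{≥1}^d and all i ∈ ρ(l); that is, η_{l,i} ≍ 2^{|l|} uniformly in i. -/
open Matrix

noncomputable section

/-- The dyadic point `c_{l,i} = i · 2^{-l}`. -/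
def cpt (l i : ℕ) : ℝ := (i : ℝ) / 2 ^ l

/-- The multidimensional dyadic point `c_{l,i}`. -/
def cpoint {d : ℕ} (l i : Fin d → ℕ) : Fin d → ℝ := fun j => cpt (l j) (i j)

/-- The set `ρ(l)` of odd multi-indices associated with the level multi-index `l`. -/
def rho {d : ℕ} (l : Fin d → ℕ) : Set (Fin d → ℕ) :=
  {i | ∀ j, Odd (i j) ∧ 1 ≤ i j ∧ i j ≤ 2 ^ (l j) - 1}

/-- The classical sparse grid of level `τ` in dimension `d`. -/
def SGset (d τ : ℕ) : Set (Fin d → ℝ) :=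
  {x | ∃ l : Fin d → ℕ, (∀ j, 1 ≤ l j) ∧ (∑ j, l j) ≤ τ + d - 1 ∧
    ∀ j, ∃ i : ℕ, 1 ≤ i ∧ i ≤ 2 ^ (l j) - 1 ∧ x j = cpt (l j) i}

/-- A tensor Markov kernel on `(0,1)^d` satisfying Assumption SL: factors
`p_j, q_j` are continuous on `[0,1]`, positive on `(0,1)`, satisfy the strict
"determinant" positivity (the precise form of `p_j/q_j` strictly increasing with
`p_j, q_j > 0`), are continuously differentiable on `(0,1)`, and both solve the
Sturm–Liouville equation `(u_j f')' + v_j f = 0` on `(0,1)`. -/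
structure TMKernelSL (d : ℕ) where
  p : Fin d → ℝ → ℝ
  q : Fin d → ℝ → ℝ
  cont_p : ∀ j, ContinuousOn (p j) (Set.Icc 0 1)
  cont_q : ∀ j, ContinuousOn (q j) (Set.Icc 0 1)
  pos_p : ∀ j, ∀ x ∈ Set.Ioo (0:ℝ) 1, 0 < p j x
  pos_q : ∀ j, ∀ x ∈ Set.Ioo (0:ℝ) 1, 0 < q j x
  det_pos : ∀ j, ∀ y ∈ Set.Icc (0:ℝ) 1, ∀ x ∈ Set.Icc (0:ℝ) 1, y < x →
    0 < p j x * q j y - p j y * q j x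
  u : Fin d → ℝ → ℝ
  v : Fin d → ℝ → ℝ
  contDiff_p : ∀ j, ContDiffOn ℝ 1 (p j) (Set.Ioo 0 1)
  contDiff_q : ∀ j, ContDiffOn ℝ 1 (q j) (Set.Ioo 0 1)
  contDiff_u : ∀ j, ContDiffOn ℝ 1 (u j) (Set.Ioo 0 1)
  cont_v : ∀ j, ContinuousOn (v j) (Set.Ioo 0 1)
  sl_p : ∀ j, ∀ x ∈ Set.Ioo (0:ℝ) 1,
    deriv (fun t => u j t * deriv (p j) t) x + v j x * p j x = 0
  sl_q : ∀ j, ∀ x ∈ Set.Ioo (0:ℝ) 1,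
    deriv (fun t => u j t * deriv (q j) t) x + v j x * q j x = 0

/-- The tensor Markov kernel `k(x,x') = ∏_j p_j(min) q_j(max)`. -/
def TMKernelSL.k {d : ℕ} (κ : TMKernelSL d) (x x' : Fin d → ℝ) : ℝ :=
  ∏ j, κ.p j (min (x j) (x' j)) * κ.q j (max (x j) (x' j))

/-- The `j`-th one-dimensional factor kernel of a TM kernel. -/
def TMKernelSL.k1 {d : ℕ} (κ : TMKernelSL d) (j : Fin d) (a b : ℝ) : ℝ :=
  κ.p j (min a b) * κ.q j (max a b)

/-- Kernel matrix of the design `x_1,…,x_n`. -/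
def kerMat {d n : ℕ} (κ : TMKernelSL d) (x : Fin n → Fin d → ℝ) :
    Matrix (Fin n) (Fin n) ℝ :=
  Matrix.of fun a b => κ.k (x a) (x b)

/-- Kernel vector `k(z) = (k(z,x_1),…,k(z,x_n))`. -/
def kerVec {d n : ℕ} (κ : TMKernelSL d) (x : Fin n → Fin d → ℝ) (z : Fin d → ℝ) :
    Fin n → ℝ :=
  fun a => κ.k z (x a)

/-- `x_1,…,x_n` is a truncated sparse grid design: the points are distinct, and for the level
`τ` with `|X_τ^SG| ≤ n < |X_{τ+1}^SG|`, the design contains all of `X_τ^SG` and is contained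
in `X_{τ+1}^SG`. -/
def IsTSGDesign {d n : ℕ} (x : Fin n → Fin d → ℝ) : Prop :=
  Function.Injective x ∧
  ∃ τ : ℕ, 1 ≤ τ ∧ (SGset d τ).ncard ≤ n ∧ n < (SGset d (τ + 1)).ncard ∧
    SGset d τ ⊆ Set.range x ∧ Set.range x ⊆ SGset d (τ + 1)

/-- One-dimensional quantity `η_{l,i}` (the squared RKHS norm of the hat function). -/
def eta1 (p q : ℝ → ℝ) (l i : ℕ) : ℝ :=
  (p (cpt l (i + 1)) * q (cpt l (i - 1)) - p (cpt l (i - 1)) * q (cpt l (i + 1))) /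
    ((p (cpt l i) * q (cpt l (i - 1)) - p (cpt l (i - 1)) * q (cpt l i)) *
      (p (cpt l (i + 1)) * q (cpt l i) - p (cpt l i) * q (cpt l (i + 1))))

/-- Multidimensional `η_{l,i} = ∏_j η^{(j)}_{l_j,i_j}`. -/
def etaP {d : ℕ} (p q : Fin d → ℝ → ℝ) (l i : Fin d → ℕ) : ℝ :=
  ∏ j, eta1 (p j) (q j) (l j) (i j)

/-- One-dimensional hat function `φ_{l,i}` associated with `p, q`. -/
def phi1 (p q : ℝ → ℝ) (l i : ℕ) (x : ℝ) : ℝ :=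
  if cpt l (i - 1) < x ∧ x ≤ cpt l i then
    (p x * q (cpt l (i - 1)) - p (cpt l (i - 1)) * q x) /
      (p (cpt l i) * q (cpt l (i - 1)) - p (cpt l (i - 1)) * q (cpt l i))
  else if cpt l i < x ∧ x < cpt l (i + 1) then
    (p (cpt l (i + 1)) * q x - p x * q (cpt l (i + 1))) /
      (p (cpt l (i + 1)) * q (cpt l i) - p (cpt l i) * q (cpt l (i + 1)))
  else 0

/-- Multidimensional hat function `φ_{l,i}(x) = ∏_j φ^{(j)}_{l_j,i_j}(x_j)`. -/
def phiD {d : ℕ} (p q : Fin d → ℝ → ℝ) (l i : Fin d → ℕ) (x : Fin d → ℝ) : ℝ :=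
  ∏ j, phi1 (p j) (q j) (l j) (i j) (x j)

/-- The open hyperrectangle `R_{l,i} = ∏_j (c_{l_j,i_j−1}, c_{l_j,i_j+1})`. -/
def hyperRect {d : ℕ} (l i : Fin d → ℕ) : Set (Fin d → ℝ) :=
  {z | ∀ j, cpt (l j) (i j - 1) < z j ∧ z j < cpt (l j) (i j + 1)}

/-- Number of nonzero entries of a real matrix. -/
def nnzM {α β : Type*} [Fintype α] [Fintype β] (M : Matrix α β ℝ) : ℕ :=
  Set.ncard {ab : α × β | M ab.1 ab.2 ≠ 0}

end

section EtaAux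
open Set intervalIntegral

/-- Two-variable integrand `H(y,t) = q(y) p'(t) − p(y) q'(t)`. -/
def Hfun (p q P' Q' : ℝ → ℝ) : ℝ × ℝ → ℝ := fun z => q z.1 * P' z.2 - p z.1 * Q' z.2

lemma key0 (p q P' Q' : ℝ → ℝ)
    (hpc : ContinuousOn p (Set.Icc 0 1)) (hqc : ContinuousOn q (Set.Icc 0 1))
    (hP'c : ContinuousOn P' (Set.Icc 0 1)) (hQ'c : ContinuousOn Q' (Set.Icc 0 1))
    (hqpos : ∀ x ∈ Set.Icc (0:ℝ) 1, 0 < q x)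
    (hpd : ∀ t ∈ Set.Ioo (0:ℝ) 1, HasDerivAt p (P' t) t)
    (hqd : ∀ t ∈ Set.Ioo (0:ℝ) 1, HasDerivAt q (Q' t) t)
    (hW : ∀ x ∈ Set.Icc (0:ℝ) 1, 0 < P' x * q x - p x * Q' x) :
    ∃ a b : ℝ, 0 < a ∧ a ≤ b ∧ ∀ y x : ℝ, 0 ≤ y → y ≤ x → x ≤ 1 →
      a * (x - y) ≤ p x * q y - p y * q x ∧ p x * q y - p y * q x ≤ b * (x - y) := by
  -- positivity of F for y < x via strict monotonicity of p/q
  have hmono : StrictMonoOn (fun t => p t / q t) (Set.Icc 0 1) := by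
    apply strictMonoOn_of_deriv_pos (convex_Icc 0 1)
    · exact hpc.div hqc fun x hx => (hqpos x hx).ne'
    · intro t ht
      rw [interior_Icc] at ht
      have ht' : t ∈ Set.Icc (0:ℝ) 1 := Ioo_subset_Icc_self ht
      have hder : HasDerivAt (fun t => p t / q t)
          ((P' t * q t - p t * Q' t) / q t ^ 2) t :=
        (hpd t ht).div (hqd t ht) (hqpos t ht').ne'
      rw [hder.deriv]
      exact div_pos (hW t ht') (pow_pos (hqpos t ht') 2)
  have hFpos : ∀ y x : ℝ, 0 ≤ y → y < x → x ≤ 1 → 0 < p x * q y - p y * q x := by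
    intro y x hy hyx hx
    have hyI : y ∈ Set.Icc (0:ℝ) 1 := ⟨hy, hyx.le.trans hx⟩
    have hxI : x ∈ Set.Icc (0:ℝ) 1 := ⟨hy.trans hyx.le, hx⟩
    have h2 := hmono hyI hxI hyx
    have hqy := hqpos y hyI
    have hqx := hqpos x hxI
    simp only [div_lt_div_iff₀ hqy hqx] at h2
    linarith
  -- minimum of the Wronskian
  obtain ⟨t₀, ht₀, hmin⟩ := isCompact_Icc.exists_isMinOn (nonempty_Icc.2 zero_le_one)
    (show ContinuousOn (fun t => P' t * q t - p t * Q' t) (Set.Icc 0 1) from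
      (hP'c.mul hqc).sub (hpc.mul hQ'c))
  obtain ⟨m₀, hm₀eq⟩ : ∃ m, m = P' t₀ * q t₀ - p t₀ * Q' t₀ := ⟨_, rfl⟩
  have hm₀ : 0 < m₀ := by rw [hm₀eq]; exact hW t₀ ht₀
  have hminle : ∀ t ∈ Set.Icc (0:ℝ) 1, m₀ ≤ P' t * q t - p t * Q' t := by
    intro t ht
    rw [hm₀eq]
    simpa using hmin ht
  -- continuity of H on the square
  have hHc : ContinuousOn (Hfun p q P' Q') (Set.Icc (0:ℝ) 1 ×ˢ Set.Icc (0:ℝ) 1) := by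
    unfold Hfun
    apply ContinuousOn.sub
    · exact (hqc.comp continuousOn_fst fun z hz => hz.1).mul
        (hP'c.comp continuousOn_snd fun z hz => hz.2)
    · exact (hpc.comp continuousOn_fst fun z hz => hz.1).mul
        (hQ'c.comp continuousOn_snd fun z hz => hz.2)
  have hKcomp : IsCompact (Set.Icc (0:ℝ) 1 ×ˢ Set.Icc (0:ℝ) 1) :=
    isCompact_Icc.prod isCompact_Icc
  -- uniform continuity gives δ
  have hUC := hKcomp.uniformContinuousOn_of_continuous hHc
  rw [Metric.uniformContinuousOn_iff] at hUC
  obtain ⟨δ, hδ, hδ'⟩ := hUC (m₀ / 2) (half_pos hm₀)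
  obtain ⟨ε, hεeq⟩ : ∃ e : ℝ, e = min (δ / 2) 1 := ⟨_, rfl⟩
  have hε : 0 < ε := by rw [hεeq]; exact lt_min (half_pos hδ) one_pos
  have hε1 : ε ≤ 1 := by rw [hεeq]; exact min_le_right _ _
  have hεδ : ε ≤ δ / 2 := by rw [hεeq]; exact min_le_left _ _
  -- near-diagonal pointwise lower bound on H
  have hHlow : ∀ y t : ℝ, y ∈ Set.Icc (0:ℝ) 1 → t ∈ Set.Icc (0:ℝ) 1 → |y - t| ≤ ε →
      m₀ / 2 ≤ Hfun p q P' Q' (y, t) := by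
    intro y t hy ht hyt
    have hdist : dist ((y, t) : ℝ × ℝ) (t, t) < δ := by
      rw [Prod.dist_eq]
      have h0 : dist t t = 0 := dist_self t
      rw [h0, max_eq_left (dist_nonneg), Real.dist_eq]
      linarith
    have h4 := hδ' _ (Set.mk_mem_prod hy ht) _ (Set.mk_mem_prod ht ht) hdist
    rw [Real.dist_eq] at h4
    have hHtt : Hfun p q P' Q' (t, t) = q t * P' t - p t * Q' t := rfl
    have hWt : m₀ ≤ P' t * q t - p t * Q' t := hminle t ht
    have h5 := (abs_lt.1 h4).1
    rw [hHtt] at h5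
    have hHy : Hfun p q P' Q' (y, t) = q y * P' t - p y * Q' t := rfl
    rw [hHy] at h5 ⊢
    nlinarith [h5, hWt]
  -- the maximum of H
  obtain ⟨z₂, hz₂, hmax⟩ := hKcomp.exists_isMaxOn
    ⟨(0, 0), Set.mk_mem_prod (left_mem_Icc.2 zero_le_one) (left_mem_Icc.2 zero_le_one)⟩ hHc
  -- far-region minimum
  have hScomp : IsCompact ((Set.Icc (0:ℝ) 1 ×ˢ Set.Icc (0:ℝ) 1) ∩ {z : ℝ × ℝ | z.1 + ε ≤ z.2}) :=
    hKcomp.inter_right (isClosed_le (continuous_fst.add continuous_const) continuous_snd)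
  have hSne : ((Set.Icc (0:ℝ) 1 ×ˢ Set.Icc (0:ℝ) 1) ∩ {z : ℝ × ℝ | z.1 + ε ≤ z.2}).Nonempty :=
    ⟨(0, ε), ⟨Set.mk_mem_prod (left_mem_Icc.2 zero_le_one) ⟨hε.le, hε1⟩, by simp⟩⟩
  have hF₂c : ContinuousOn (fun z : ℝ × ℝ => p z.2 * q z.1 - p z.1 * q z.2)
      ((Set.Icc (0:ℝ) 1 ×ˢ Set.Icc (0:ℝ) 1) ∩ {z : ℝ × ℝ | z.1 + ε ≤ z.2}) := by
    apply ContinuousOn.sub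
    · exact (hpc.comp continuousOn_snd fun z hz => hz.1.2).mul
        (hqc.comp continuousOn_fst fun z hz => hz.1.1)
    · exact (hpc.comp continuousOn_fst fun z hz => hz.1.1).mul
        (hqc.comp continuousOn_snd fun z hz => hz.1.2)
  obtain ⟨z₁, hz₁, hmin₁⟩ := hScomp.exists_isMinOn hSne hF₂c
  obtain ⟨m₁, hm₁eq⟩ : ∃ m, m = p z₁.2 * q z₁.1 - p z₁.1 * q z₁.2 := ⟨_, rfl⟩
  have hm₁ : 0 < m₁ := by
    rw [hm₁eq]
    exact hFpos z₁.1 z₁.2 hz₁.1.1.1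
      (by have := hz₁.2; simp only [Set.mem_setOf_eq] at this; linarith) hz₁.1.2.2
  have hminS : ∀ y x : ℝ, 0 ≤ y → x ≤ 1 → y + ε ≤ x → m₁ ≤ p x * q y - p y * q x := by
    intro y x hy hx hyx
    have hyI : y ∈ Set.Icc (0:ℝ) 1 := ⟨hy, by linarith⟩
    have hxI : x ∈ Set.Icc (0:ℝ) 1 := ⟨by linarith, hx⟩
    have hmem : ((y, x) : ℝ × ℝ) ∈
        (Set.Icc (0:ℝ) 1 ×ˢ Set.Icc (0:ℝ) 1) ∩ {z : ℝ × ℝ | z.1 + ε ≤ z.2} :=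
      ⟨Set.mk_mem_prod hyI hxI, hyx⟩
    rw [hm₁eq]
    simpa using hmin₁ hmem
  -- assemble the constants
  refine ⟨min (m₀ / 2) m₁, max (Hfun p q P' Q' z₂) (min (m₀ / 2) m₁),
    lt_min (half_pos hm₀) hm₁, le_max_right _ _, ?_⟩
  intro y x hy hyx hx
  have hyI : y ∈ Set.Icc (0:ℝ) 1 := ⟨hy, hyx.trans hx⟩
  have hxI : x ∈ Set.Icc (0:ℝ) 1 := ⟨hy.trans hyx, hx⟩
  have hsub : Set.Icc y x ⊆ Set.Icc (0:ℝ) 1 := Icc_subset_Icc hy hx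
  have hsub' : Set.Ioo y x ⊆ Set.Ioo (0:ℝ) 1 := Ioo_subset_Ioo hy hx
  have hintP : IntervalIntegrable P' MeasureTheory.volume y x :=
    (hP'c.mono hsub).intervalIntegrable_of_Icc hyx
  have hintQ : IntervalIntegrable Q' MeasureTheory.volume y x :=
    (hQ'c.mono hsub).intervalIntegrable_of_Icc hyx
  have hintH : IntervalIntegrable (fun t => Hfun p q P' Q' (y, t)) MeasureTheory.volume y x := by
    have h6 : (fun t => Hfun p q P' Q' (y, t)) = fun t => q y * P' t - p y * Q' t := rfl
    rw [h6]
    exact (hintP.const_mul _).sub (hintQ.const_mul _)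
  have hpeq : ∫ t in y..x, P' t = p x - p y := by
    apply integral_eq_sub_of_hasDeriv_right_of_le hyx (hpc.mono hsub) _ hintP
    intro t ht
    exact (hpd t (hsub' ht)).hasDerivWithinAt
  have hqeq : ∫ t in y..x, Q' t = q x - q y := by
    apply integral_eq_sub_of_hasDeriv_right_of_le hyx (hqc.mono hsub) _ hintQ
    intro t ht
    exact (hqd t (hsub' ht)).hasDerivWithinAt
  have hrep : p x * q y - p y * q x = ∫ t in y..x, Hfun p q P' Q' (y, t) := by
    have h6 : (fun t => Hfun p q P' Q' (y, t)) = fun t => q y * P' t - p y * Q' t := rfl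
    rw [h6, integral_sub (hintP.const_mul _) (hintQ.const_mul _),
      integral_const_mul, integral_const_mul, hpeq, hqeq]
    ring
  constructor
  · -- lower bound
    rcases le_or_gt (x - y) ε with hcase | hcase
    · have hlow : m₀ / 2 * (x - y) ≤ p x * q y - p y * q x := by
        rw [hrep]
        calc m₀ / 2 * (x - y) = ∫ _ in y..x, m₀ / 2 := by
              rw [intervalIntegral.integral_const, smul_eq_mul]; ring
          _ ≤ ∫ t in y..x, Hfun p q P' Q' (y, t) := by
              apply integral_mono_on hyx intervalIntegrable_const hintH
              intro t ht
              apply hHlow y t hyI (hsub ht)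
              rw [abs_sub_comm, abs_of_nonneg (by linarith [ht.1])]
              linarith [ht.2]
      calc min (m₀ / 2) m₁ * (x - y) ≤ m₀ / 2 * (x - y) :=
            mul_le_mul_of_nonneg_right (min_le_left _ _) (by linarith)
        _ ≤ _ := hlow
    · have h7 : m₁ ≤ p x * q y - p y * q x := hminS y x hy hx (by linarith)
      have hxy1 : x - y ≤ 1 := by
        rcases hyI with ⟨h8, _⟩; rcases hxI with ⟨_, h9⟩; linarith
      calc min (m₀ / 2) m₁ * (x - y) ≤ m₁ * (x - y) :=
            mul_le_mul_of_nonneg_right (min_le_right _ _) (by linarith)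
        _ ≤ m₁ * 1 := mul_le_mul_of_nonneg_left hxy1 hm₁.le
        _ = m₁ := mul_one _
        _ ≤ _ := h7
  · -- upper bound
    rw [hrep]
    calc (∫ t in y..x, Hfun p q P' Q' (y, t)) ≤ ∫ _ in y..x, Hfun p q P' Q' z₂ := by
          apply integral_mono_on hyx hintH intervalIntegrable_const
          intro t ht
          exact hmax (Set.mk_mem_prod hyI (hsub ht))
      _ = Hfun p q P' Q' z₂ * (x - y) := by
          rw [intervalIntegral.integral_const, smul_eq_mul]; ring
      _ ≤ max (Hfun p q P' Q' z₂) (min (m₀ / 2) m₁) * (x - y) :=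
          mul_le_mul_of_nonneg_right (le_max_left _ _) (by linarith)

lemma key1 (p q : ℝ → ℝ) (hp : ContDiffOn ℝ 1 p (Set.Icc 0 1))
    (hq : ContDiffOn ℝ 1 q (Set.Icc 0 1))
    (hppos : ∀ x ∈ Set.Icc (0:ℝ) 1, 0 < p x)
    (hqpos : ∀ x ∈ Set.Icc (0:ℝ) 1, 0 < q x)
    (hW : ∀ x ∈ Set.Icc (0:ℝ) 1,
      0 < derivWithin p (Set.Icc 0 1) x * q x - p x * derivWithin q (Set.Icc 0 1) x) :
    ∃ a b : ℝ, 0 < a ∧ a ≤ b ∧ ∀ y x : ℝ, 0 ≤ y → y ≤ x → x ≤ 1 →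
      a * (x - y) ≤ p x * q y - p y * q x ∧ p x * q y - p y * q x ≤ b * (x - y) := by
  have hud : UniqueDiffOn ℝ (Set.Icc (0:ℝ) 1) := uniqueDiffOn_Icc one_pos
  apply key0 p q (derivWithin p (Set.Icc 0 1)) (derivWithin q (Set.Icc 0 1))
    hp.continuousOn hq.continuousOn
    (hp.continuousOn_derivWithin hud le_rfl) (hq.continuousOn_derivWithin hud le_rfl)
    hqpos _ _ hW
  · intro t ht
    exact ((hp.differentiableOn one_ne_zero t (Ioo_subset_Icc_self ht)).hasDerivWithinAt).hasDerivAt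
      (Icc_mem_nhds ht.1 ht.2)
  · intro t ht
    exact ((hq.differentiableOn one_ne_zero t (Ioo_subset_Icc_self ht)).hasDerivWithinAt).hasDerivAt
      (Icc_mem_nhds ht.1 ht.2)


lemma eta1_bound (p q : ℝ → ℝ) (a b A B : ℝ) (ha : 0 < a) (hab : a ≤ b)
    (hA : A * b ^ 2 = 2 * a) (hB : B * a ^ 2 = 2 * b)
    (hF : ∀ y x : ℝ, 0 ≤ y → y ≤ x → x ≤ 1 →
      a * (x - y) ≤ p x * q y - p y * q x ∧ p x * q y - p y * q x ≤ b * (x - y))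
    (l i : ℕ) (hi1 : 1 ≤ i) (hi2 : i ≤ 2 ^ l - 1) :
    A * 2 ^ l ≤ eta1 p q l i ∧ eta1 p q l i ≤ B * 2 ^ l := by
  have hb : 0 < b := lt_of_lt_of_le ha hab
  have ht : (0:ℝ) < 2 ^ l := by positivity
  have hApos : 0 < A := by nlinarith [sq_nonneg b]
  have hBpos : 0 < B := by nlinarith [sq_nonneg a]
  have h2l : (1:ℕ) ≤ 2 ^ l := Nat.one_le_two_pow
  have hi3 : i + 1 ≤ 2 ^ l := by omega
  have hcast : ((i - 1 : ℕ) : ℝ) = (i : ℝ) - 1 := by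
    rw [Nat.cast_sub hi1, Nat.cast_one]
  have hi1R : (1:ℝ) ≤ (i:ℝ) := by exact_mod_cast hi1
  have hi3R : ((i:ℝ) + 1) ≤ 2 ^ l := by
    have h : ((i + 1 : ℕ) : ℝ) ≤ ((2 ^ l : ℕ) : ℝ) := Nat.cast_le.2 hi3
    push_cast at h
    exact h
  obtain ⟨u, hu⟩ : ∃ u : ℝ, u = 1 / 2 ^ l := ⟨_, rfl⟩
  have hupos : 0 < u := by rw [hu]; positivity
  have hu2 : u * 2 ^ l = 1 := by rw [hu]; field_simp
  have hcm : cpt l (i - 1) = ((i:ℝ) - 1) / 2 ^ l := by simp only [cpt, hcast]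
  have hc : cpt l i = (i:ℝ) / 2 ^ l := rfl
  have hcp : cpt l (i + 1) = ((i:ℝ) + 1) / 2 ^ l := by simp only [cpt]; push_cast; ring
  have h0cm : 0 ≤ cpt l (i - 1) := by
    rw [hcm]; exact div_nonneg (by linarith) ht.le
  have hccm : cpt l (i - 1) ≤ cpt l i := by
    rw [hcm, hc]; exact (div_le_div_iff_of_pos_right ht).2 (by linarith)
  have hccp : cpt l i ≤ cpt l (i + 1) := by
    rw [hc, hcp]; exact (div_le_div_iff_of_pos_right ht).2 (by linarith)
  have hcp1 : cpt l (i + 1) ≤ 1 := by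
    rw [hcp]; exact (div_le_one ht).2 (by linarith)
  have hc1 : cpt l i ≤ 1 := hccp.trans hcp1
  have h0c : 0 ≤ cpt l i := h0cm.trans hccm
  have e1 : cpt l i - cpt l (i - 1) = u := by rw [hc, hcm, hu]; ring
  have e2 : cpt l (i + 1) - cpt l i = u := by rw [hcp, hc, hu]; ring
  have e3 : cpt l (i + 1) - cpt l (i - 1) = 2 * u := by rw [hcp, hcm, hu]; ring
  obtain ⟨hD1l, hD1u⟩ := hF _ _ h0cm hccm hc1
  obtain ⟨hD2l, hD2u⟩ := hF _ _ h0c hccp hcp1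
  obtain ⟨hNl, hNu⟩ := hF _ _ h0cm (hccm.trans hccp) hcp1
  rw [e1] at hD1l hD1u
  rw [e2] at hD2l hD2u
  rw [e3] at hNl hNu
  have hau : 0 < a * u := mul_pos ha hupos
  have hD1pos : 0 < p (cpt l i) * q (cpt l (i - 1)) - p (cpt l (i - 1)) * q (cpt l i) :=
    lt_of_lt_of_le hau hD1l
  have hD2pos : 0 < p (cpt l (i + 1)) * q (cpt l i) - p (cpt l i) * q (cpt l (i + 1)) :=
    lt_of_lt_of_le hau hD2l
  unfold eta1
  constructor
  · rw [le_div_iff₀ (mul_pos hD1pos hD2pos)]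
    calc A * 2 ^ l *
        ((p (cpt l i) * q (cpt l (i - 1)) - p (cpt l (i - 1)) * q (cpt l i)) *
          (p (cpt l (i + 1)) * q (cpt l i) - p (cpt l i) * q (cpt l (i + 1))))
        ≤ A * 2 ^ l * ((b * u) * (b * u)) := by
          apply mul_le_mul_of_nonneg_left
            (mul_le_mul hD1u hD2u hD2pos.le (by positivity))
            (by positivity)
      _ = 2 * a * u := by linear_combination (2 ^ l * u ^ 2) * hA + (2 * a * u) * hu2
      _ ≤ _ := by linarith
  · rw [div_le_iff₀ (mul_pos hD1pos hD2pos)]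
    calc p (cpt l (i + 1)) * q (cpt l (i - 1)) - p (cpt l (i - 1)) * q (cpt l (i + 1))
        ≤ 2 * b * u := by linarith
      _ = B * 2 ^ l * ((a * u) * (a * u)) := by
          linear_combination (-(2 ^ l * u ^ 2)) * hB - (2 * b * u) * hu2
      _ ≤ B * 2 ^ l *
          ((p (cpt l i) * q (cpt l (i - 1)) - p (cpt l (i - 1)) * q (cpt l i)) *
            (p (cpt l (i + 1)) * q (cpt l i) - p (cpt l i) * q (cpt l (i + 1)))) := by
          apply mul_le_mul_of_nonneg_left
            (mul_le_mul hD1l hD2l (by positivity) hD1pos.le)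
            (by positivity)

end EtaAux

/-- **Lemma EC.2, Ding & Zhang.** For positive continuously differentiable `p_j, q_j` on
`[0,1]` with `p_j' q_j − p_j q_j' > 0` on `[0,1]`, one has `η_{l,i} ≍ 2^{|l|}` uniformly in
`i ∈ ρ(l)`: there exist `0 < a ≤ b` with `a 2^{|l|} ≤ η_{l,i} ≤ b 2^{|l|}` for all valid
`(l,i)`. -/
theorem eta_asymptotics (d : ℕ) (hd : 1 ≤ d) (p q : Fin d → ℝ → ℝ)
    (hp : ∀ j, ContDiffOn ℝ 1 (p j) (Set.Icc 0 1))
    (hq : ∀ j, ContDiffOn ℝ 1 (q j) (Set.Icc 0 1))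
    (hppos : ∀ j, ∀ x ∈ Set.Icc (0:ℝ) 1, 0 < p j x)
    (hqpos : ∀ j, ∀ x ∈ Set.Icc (0:ℝ) 1, 0 < q j x)
    (hW : ∀ j, ∀ x ∈ Set.Icc (0:ℝ) 1,
      0 < derivWithin (p j) (Set.Icc 0 1) x * q j x
            - p j x * derivWithin (q j) (Set.Icc 0 1) x) :
    ∃ a b : ℝ, 0 < a ∧ a ≤ b ∧
      ∀ l i : Fin d → ℕ, (∀ j, 1 ≤ l j) → i ∈ rho l →
        a * 2 ^ (∑ j, l j) ≤ etaP p q l i ∧ etaP p q l i ≤ b * 2 ^ (∑ j, l j) := by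
  have key := fun j => key1 (p j) (q j) (hp j) (hq j) (hppos j) (hqpos j) (hW j)
  choose Af Bf hAf hABf hFf using key
  have hne : (Finset.univ : Finset (Fin d)).Nonempty := ⟨⟨0, hd⟩, Finset.mem_univ _⟩
  obtain ⟨a', ha'eq⟩ : ∃ x, x = Finset.univ.inf' hne Af := ⟨_, rfl⟩
  obtain ⟨b', hb'eq⟩ : ∃ x, x = Finset.univ.sup' hne Bf := ⟨_, rfl⟩
  have ha' : 0 < a' := by
    rw [ha'eq]
    exact (Finset.lt_inf'_iff hne).2 fun j _ => hAf j
  have hle : ∀ j, a' ≤ Af j := fun j => by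
    rw [ha'eq]; exact Finset.inf'_le _ (Finset.mem_univ j)
  have hge : ∀ j, Bf j ≤ b' := fun j => by
    rw [hb'eq]; exact Finset.le_sup' _ (Finset.mem_univ j)
  have hab' : a' ≤ b' := (hle ⟨0, hd⟩).trans ((hABf _).trans (hge _))
  have hb' : 0 < b' := lt_of_lt_of_le ha' hab'
  have hF' : ∀ j, ∀ y x : ℝ, 0 ≤ y → y ≤ x → x ≤ 1 →
      a' * (x - y) ≤ p j x * q j y - p j y * q j x ∧
        p j x * q j y - p j y * q j x ≤ b' * (x - y) := by
    intro j y x hy hyx hx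
    obtain ⟨h1, h2⟩ := hFf j y x hy hyx hx
    exact ⟨le_trans (mul_le_mul_of_nonneg_right (hle j) (by linarith)) h1,
      le_trans h2 (mul_le_mul_of_nonneg_right (hge j) (by linarith))⟩
  obtain ⟨A0, hA0⟩ : ∃ x : ℝ, x = 2 * a' / b' ^ 2 := ⟨_, rfl⟩
  obtain ⟨B0, hB0⟩ : ∃ x : ℝ, x = 2 * b' / a' ^ 2 := ⟨_, rfl⟩
  have hA0eq : A0 * b' ^ 2 = 2 * a' := by rw [hA0]; field_simp
  have hB0eq : B0 * a' ^ 2 = 2 * b' := by rw [hB0]; field_simp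
  have hA0pos : 0 < A0 := by rw [hA0]; positivity
  have hB0pos : 0 < B0 := by rw [hB0]; positivity
  have hA0B0 : A0 ≤ B0 := by
    rw [hA0, hB0, div_le_div_iff₀ (by positivity) (by positivity)]
    nlinarith [pow_le_pow_left₀ ha'.le hab' 3]
  refine ⟨A0 ^ d, B0 ^ d, pow_pos hA0pos d, pow_le_pow_left₀ hA0pos.le hA0B0 d, ?_⟩
  intro l i hl hi
  have hbound : ∀ j, A0 * 2 ^ (l j) ≤ eta1 (p j) (q j) (l j) (i j) ∧
      eta1 (p j) (q j) (l j) (i j) ≤ B0 * 2 ^ (l j) := fun j =>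
    eta1_bound (p j) (q j) a' b' A0 B0 ha' hab' hA0eq hB0eq (hF' j) (l j) (i j)
      (hi j).2.1 (hi j).2.2
  have hprodA : ∏ j : Fin d, (A0 * 2 ^ (l j) : ℝ) = A0 ^ d * 2 ^ (∑ j, l j) := by
    rw [Finset.prod_mul_distrib, Finset.prod_const, Finset.prod_pow_eq_pow_sum,
      Finset.card_univ, Fintype.card_fin]
  have hprodB : ∏ j : Fin d, (B0 * 2 ^ (l j) : ℝ) = B0 ^ d * 2 ^ (∑ j, l j) := by
    rw [Finset.prod_mul_distrib, Finset.prod_const, Finset.prod_pow_eq_pow_sum,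
      Finset.card_univ, Fintype.card_fin]
  constructor
  · calc A0 ^ d * 2 ^ (∑ j, l j) = ∏ j : Fin d, (A0 * 2 ^ (l j) : ℝ) := hprodA.symm
      _ ≤ etaP p q l i :=
        Finset.prod_le_prod (fun j _ => by positivity) (fun j _ => (hbound j).1)
  · calc etaP p q l i ≤ ∏ j : Fin d, (B0 * 2 ^ (l j) : ℝ) :=
        Finset.prod_le_prod
          (fun j _ => le_trans (by positivity) (hbound j).1)
          (fun j _ => (hbound j).2)
      _ = B0 ^ d * 2 ^ (∑ j, l j) := hprodB
end

section
/- Let p, q : [0,1] → ℝ be continuous with p(x)q(y) − p(y)q(x) > 0 whenever 0 ≤ y < x ≤ 1, and let k(x,y) := p(min(x,y))·q(max(x,y)). Fix an integer l ≥ 1 and an odd integer i with 1 ≤ i ≤ 2^l − 1, and define η_{l,i} := (p(c_{l,i+1})q(c_{l,i−1}) − p(c_{l,i−1})q(c_{l,i+1})) / [ (p(c_{l,i})q(c_{l,i−1}) − p(c_{l,i−1})q(c_{l,i}))·(p(c_{l,i+1})q(c_{l,i}) − p(c_{l,i})q(c_{l,i+1})) ], η_{l,i−1} := −1/(p(c_{l,i})q(c_{l,i−1})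 − p(c_{l,i−1})q(c_{l,i})), and η_{l,i+1} := −1/(p(c_{l,i+1})q(c_{l,i}) − p(c_{l,i})q(c_{l,i+1})). Then for every x ∈ [0,1], φ_{l,i}(x) = η_{l,i−1}·k(x, c_{l,i−1}) + η_{l,i}·k(x, c_{l,i}) + η_{l,i+1}·k(x, c_{l,i+1}). -/
open Matrix

/-- **Hat functions as kernel combinations (eq. (EC.5), Ding & Zhang).** For a
one-dimensional TM kernel `k(x,y) = p(min x y) q(max x y)`, the hat function `φ_{l,i}`
equals the linear combination
`η_{l,i−1} k(·, c_{l,i−1}) + η_{l,i} k(·, c_{l,i}) + η_{l,i+1} k(·, c_{l,i+1})` on `[0,1]`. -/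
theorem hat_function_kernel_combination (p q : ℝ → ℝ)
    (hp : ContinuousOn p (Set.Icc 0 1)) (hq : ContinuousOn q (Set.Icc 0 1))
    (hpq : ∀ y ∈ Set.Icc (0:ℝ) 1, ∀ x ∈ Set.Icc (0:ℝ) 1, y < x →
      0 < p x * q y - p y * q x)
    (l i : ℕ) (hl : 1 ≤ l) (hiodd : Odd i) (hi1 : 1 ≤ i) (hi2 : i ≤ 2 ^ l - 1)
    (k : ℝ → ℝ → ℝ) (hk : ∀ a b, k a b = p (min a b) * q (max a b))
    (ηm η0 ηp : ℝ)
    (hηm : ηm = -1 / (p (cpt l i) * q (cpt l (i - 1)) - p (cpt l (i - 1)) * q (cpt l i)))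
    (hη0 : η0 = eta1 p q l i)
    (hηp : ηp = -1 / (p (cpt l (i + 1)) * q (cpt l i) - p (cpt l i) * q (cpt l (i + 1)))) :
    ∀ x ∈ Set.Icc (0:ℝ) 1,
      phi1 p q l i x =
        ηm * k x (cpt l (i - 1)) + η0 * k x (cpt l i) + ηp * k x (cpt l (i + 1)) := by
  have h2l : (0:ℝ) < 2 ^ l := by positivity
  have hab : cpt l (i - 1) < cpt l i := by
    unfold cpt
    apply div_lt_div_of_pos_right _ h2l
    exact_mod_cast Nat.sub_lt hi1 one_pos
  have hbc : cpt l i < cpt l (i + 1) := by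
    unfold cpt
    apply div_lt_div_of_pos_right _ h2l
    exact_mod_cast Nat.lt_succ_self i
  have ha0 : (0:ℝ) ≤ cpt l (i - 1) := by
    unfold cpt; positivity
  have hc1 : cpt l (i + 1) ≤ 1 := by
    unfold cpt
    rw [div_le_one h2l]
    have : i + 1 ≤ 2 ^ l := by omega
    exact_mod_cast this
  have haI : cpt l (i - 1) ∈ Set.Icc (0:ℝ) 1 := ⟨ha0, le_of_lt (lt_of_lt_of_le (hab.trans hbc) hc1)⟩
  have hbI : cpt l i ∈ Set.Icc (0:ℝ) 1 := ⟨le_of_lt (lt_of_le_of_lt ha0 hab), le_of_lt (lt_of_lt_of_le hbc hc1)⟩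
  have hcI : cpt l (i + 1) ∈ Set.Icc (0:ℝ) 1 := ⟨le_of_lt (lt_of_le_of_lt ha0 (hab.trans hbc)), hc1⟩
  have hD1 : p (cpt l i) * q (cpt l (i - 1)) - p (cpt l (i - 1)) * q (cpt l i) ≠ 0 :=
    ne_of_gt (hpq _ haI _ hbI hab)
  have hD2 : p (cpt l (i + 1)) * q (cpt l i) - p (cpt l i) * q (cpt l (i + 1)) ≠ 0 :=
    ne_of_gt (hpq _ hbI _ hcI hbc)
  intro x hx
  subst hηm hη0 hηp
  unfold eta1
  rcases le_or_gt x (cpt l (i - 1)) with h1 | h1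
  · -- x ≤ a
    have hxb : x < cpt l i := lt_of_le_of_lt h1 hab
    have hxc : x < cpt l (i + 1) := hxb.trans hbc
    rw [phi1, if_neg (by intro h; exact absurd h.1 (not_lt.mpr h1)),
      if_neg (by intro h; exact absurd h.1 (not_lt.mpr hxb.le)),
      hk, hk, hk, min_eq_left h1, max_eq_right h1, min_eq_left hxb.le,
      max_eq_right hxb.le, min_eq_left hxc.le, max_eq_right hxc.le]
    set D1 := p (cpt l i) * q (cpt l (i - 1)) - p (cpt l (i - 1)) * q (cpt l i) with hD1d
    set D2 := p (cpt l (i + 1)) * q (cpt l i) - p (cpt l i) * q (cpt l (i + 1)) with hD2d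
    field_simp
    rw [hD1d, hD2d]
    ring
  · rcases le_or_gt x (cpt l i) with h2 | h2
    · -- a < x ≤ b
      have hxc : x < cpt l (i + 1) := lt_of_le_of_lt h2 hbc
      rw [phi1, if_pos ⟨h1, h2⟩,
        hk, hk, hk, min_eq_right h1.le, max_eq_left h1.le, min_eq_left h2,
        max_eq_right h2, min_eq_left hxc.le, max_eq_right hxc.le]
      set D1 := p (cpt l i) * q (cpt l (i - 1)) - p (cpt l (i - 1)) * q (cpt l i) with hD1d
      set D2 := p (cpt l (i + 1)) * q (cpt l i) - p (cpt l i) * q (cpt l (i + 1)) with hD2d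
      field_simp
      rw [hD1d, hD2d]
      ring
    · rcases lt_or_ge x (cpt l (i + 1)) with h3 | h3
      · -- b < x < c
        rw [phi1, if_neg (by intro h; exact absurd h.2 (not_le.mpr h2)),
          if_pos ⟨h2, h3⟩,
          hk, hk, hk, min_eq_right h1.le, max_eq_left h1.le,
          min_eq_right h2.le, max_eq_left h2.le, min_eq_left h3.le, max_eq_right h3.le]
        set D1 := p (cpt l i) * q (cpt l (i - 1)) - p (cpt l (i - 1)) * q (cpt l i) with hD1d
        set D2 := p (cpt l (i + 1)) * q (cpt l i) - p (cpt l i) * q (cpt l (i + 1)) with hD2d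
        field_simp
        rw [hD1d, hD2d]
        ring
      · -- c ≤ x
        have hbx : cpt l i < x := h2
        rw [phi1, if_neg (by intro h; exact absurd h.2 (not_le.mpr h2)),
          if_neg (by intro h; exact absurd h.2 (not_lt.mpr h3)),
          hk, hk, hk, min_eq_right h1.le, max_eq_left h1.le,
          min_eq_right h2.le, max_eq_left h2.le, min_eq_right h3, max_eq_left h3]
        set D1 := p (cpt l i) * q (cpt l (i - 1)) - p (cpt l (i - 1)) * q (cpt l i) with hD1d
        set D2 := p (cpt l (i + 1)) * q (cpt l i) - p (cpt l i) * q (cpt l (i + 1)) with hD2d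
        field_simp
        rw [hD1d, hD2d]
        ring
end

section
/- Let k be a tensor Markov kernel on (0,1)^d satisfying Assumption SL, with associated hat functions φ_{l,i}. There exists a constant C > 0, depending only on k and d, such that for every n ≥ 2, every truncated sparse grid X_n^TSG of size n, and every function g in the linear span of { φ_{l,i} : c_{l,i} ∈ X_n^TSG } (canonical indices i ∈ ρ(l)): sup_{x ∈ (0,1)^d} |g(x)| ≤ C·(log n)^d · max_{x' ∈ X_n^TSG} |g(x')|. -/
open Matrix

noncomputable section

namespace HatAux

open Set Finset

lemma cpt_nonneg (l i : ℕ) : 0 ≤ cpt l i := by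
  unfold cpt; positivity

lemma cpt_le_cpt {l i i' : ℕ} (h : i ≤ i') : cpt l i ≤ cpt l i' := by
  unfold cpt
  have h' : (i:ℝ) ≤ i' := by exact_mod_cast h
  gcongr

lemma cpt_lt_cpt {l i i' : ℕ} (h : i < i') : cpt l i < cpt l i' := by
  unfold cpt
  apply div_lt_div_of_pos_right ?_ (by positivity)
  exact_mod_cast h

lemma cpt_le_one {l i : ℕ} (h : i ≤ 2 ^ l) : cpt l i ≤ 1 := by
  unfold cpt
  rw [div_le_one (by positivity)]
  exact_mod_cast h

lemma cpt_mem_Icc {l i : ℕ} (h : i ≤ 2 ^ l) : cpt l i ∈ Icc (0:ℝ) 1 :=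
  ⟨cpt_nonneg l i, cpt_le_one h⟩

lemma cpt_shift {l l' : ℕ} (h : l ≤ l') (m : ℕ) :
    cpt l m = cpt l' (m * 2 ^ (l' - l)) := by
  unfold cpt
  have h2 : (2:ℝ) ^ l' = 2 ^ l * 2 ^ (l' - l) := by
    rw [← pow_add]; congr 1; omega
  push_cast
  rw [h2]
  field_simp

lemma cpt_halve {l k : ℕ} (hl : 1 ≤ l) : cpt l (2 * k) = cpt (l - 1) k := by
  have := cpt_shift (l := l - 1) (l' := l) (by omega) k
  rw [this]
  congr 1
  have : l - (l - 1) = 1 := by omega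
  rw [this]; ring

lemma cpt_inj {l i i' : ℕ} (h : cpt l i = cpt l i') : i = i' := by
  unfold cpt at h
  have : (i : ℝ) = i' := by
    field_simp at h; exact_mod_cast h
  exact_mod_cast this

lemma level_le_of_cpt_eq {l i l' i' : ℕ} (hio : Odd i)
    (h : cpt l i = cpt l' i') : l ≤ l' := by
  by_contra hc
  push_neg at hc
  unfold cpt at h
  have hmul : (i : ℝ) * 2 ^ l' = (i' : ℝ) * 2 ^ l := by
    field_simp at h
    linarith [h]
  have hN : i * 2 ^ l' = i' * 2 ^ l := by exact_mod_cast hmul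
  have h2 : 2 ^ l = 2 ^ l' * 2 ^ (l - l') := by rw [← pow_add]; congr 1; omega
  rw [h2, ← mul_assoc] at hN
  have : i = i' * 2 ^ (l - l') := by
    have hp : 0 < 2 ^ l' := Nat.pow_pos (by norm_num)
    exact Nat.eq_of_mul_eq_mul_right hp (by linarith [hN])
  have heven : 2 ∣ i := by
    rw [this]; exact Dvd.dvd.mul_left (dvd_pow_self 2 (by omega)) i'
  obtain ⟨w, hw⟩ := hio
  omega

/-- key parity separation: a point of strictly coarser level is outside the open
support interval `(cpt l (i-1), cpt l (i+1))` of an odd node `i` at level `l`. -/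
lemma dyadic_sep {l' l i : ℕ} (hlt : l' < l) (hio : Odd i) (k : ℕ) :
    cpt l' k ≤ cpt l (i - 1) ∨ cpt l (i + 1) ≤ cpt l' k := by
  have hsh : cpt l' k = cpt l (k * 2 ^ (l - l')) := cpt_shift (le_of_lt hlt) k
  set m := k * 2 ^ (l - l') with hm
  have hme : 2 ∣ m := by
    apply Dvd.dvd.mul_left
    exact dvd_pow_self 2 (by omega)
  obtain ⟨w, hw⟩ := hio
  have : m ≤ i - 1 ∨ i + 1 ≤ m := by omega
  rcases this with h | h
  · left; rw [hsh]; exact cpt_le_cpt h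
  · right; rw [hsh]; exact cpt_le_cpt h


/-- the determinant `D(a,b) = p(b)q(a) - p(a)q(b)`. -/
def Dd (p q : ℝ → ℝ) (a b : ℝ) : ℝ := p b * q a - p a * q b

/-- stencil weight for the left neighbor. -/
def wm (p q : ℝ → ℝ) (l i : ℕ) : ℝ :=
  Dd p q (cpt l i) (cpt l (i + 1)) / Dd p q (cpt l (i - 1)) (cpt l (i + 1))

/-- stencil weight for the right neighbor. -/
def wp (p q : ℝ → ℝ) (l i : ℕ) : ℝ :=
  Dd p q (cpt l (i - 1)) (cpt l i) / Dd p q (cpt l (i - 1)) (cpt l (i + 1))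

section OneDim

variable {p q : ℝ → ℝ} {Cs : ℝ}

lemma Dd_pos (hdet : ∀ y ∈ Icc (0:ℝ) 1, ∀ x ∈ Icc (0:ℝ) 1, y < x →
      0 < p x * q y - p y * q x)
    {a b : ℝ} (ha : a ∈ Icc (0:ℝ) 1) (hb : b ∈ Icc (0:ℝ) 1) (h : a < b) :
    0 < Dd p q a b := hdet a ha b hb h

lemma Dd_nonneg (hdet : ∀ y ∈ Icc (0:ℝ) 1, ∀ x ∈ Icc (0:ℝ) 1, y < x →
      0 < p x * q y - p y * q x)
    {a b : ℝ} (ha : a ∈ Icc (0:ℝ) 1) (hb : b ∈ Icc (0:ℝ) 1) (h : a ≤ b) :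
    0 ≤ Dd p q a b := by
  rcases eq_or_lt_of_le h with rfl | h
  · unfold Dd; ring_nf; exact le_refl 0
  · exact (Dd_pos hdet ha hb h).le

variable (hdet : ∀ y ∈ Icc (0:ℝ) 1, ∀ x ∈ Icc (0:ℝ) 1, y < x →
      0 < p x * q y - p y * q x)
  (hs : ∀ x ∈ Icc (0:ℝ) 1, 0 < p x + q x)
  (hCs : ∀ x ∈ Icc (0:ℝ) 1, ∀ y ∈ Icc (0:ℝ) 1, p x + q x ≤ Cs * (p y + q y))
  (hCs1 : 1 ≤ Cs)

section Node

variable {l i : ℕ} (hi1 : 1 ≤ i) (hi2 : i + 1 ≤ 2 ^ l)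

include hi1 hi2

lemma mem_a : cpt l (i - 1) ∈ Icc (0:ℝ) 1 := cpt_mem_Icc (by omega)
lemma mem_c : cpt l i ∈ Icc (0:ℝ) 1 := cpt_mem_Icc (by omega)
lemma mem_b : cpt l (i + 1) ∈ Icc (0:ℝ) 1 := cpt_mem_Icc (by omega)
lemma lt_ac : cpt l (i - 1) < cpt l i := cpt_lt_cpt (by omega)
lemma lt_cb : cpt l i < cpt l (i + 1) := cpt_lt_cpt (by omega)
lemma lt_ab : cpt l (i - 1) < cpt l (i + 1) := cpt_lt_cpt (by omega)

include hdet

lemma stencil_repr :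
    p (cpt l i) = wm p q l i * p (cpt l (i - 1)) + wp p q l i * p (cpt l (i + 1)) ∧
    q (cpt l i) = wm p q l i * q (cpt l (i - 1)) + wp p q l i * q (cpt l (i + 1)) := by
  have hD : 0 < Dd p q (cpt l (i - 1)) (cpt l (i + 1)) :=
    Dd_pos hdet (mem_a hi1 hi2) (mem_b hi1 hi2) (lt_ab hi1 hi2)
  unfold wm wp Dd at *
  constructor <;> (rw [div_mul_eq_mul_div, div_mul_eq_mul_div, ← add_div, eq_div_iff hD.ne']; ring)

lemma wm_nonneg : 0 ≤ wm p q l i :=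
  div_nonneg (Dd_nonneg hdet (mem_c hi1 hi2) (mem_b hi1 hi2) (lt_cb hi1 hi2).le)
    (Dd_pos hdet (mem_a hi1 hi2) (mem_b hi1 hi2) (lt_ab hi1 hi2)).le

lemma wp_nonneg : 0 ≤ wp p q l i :=
  div_nonneg (Dd_nonneg hdet (mem_a hi1 hi2) (mem_c hi1 hi2) (lt_ac hi1 hi2).le)
    (Dd_pos hdet (mem_a hi1 hi2) (mem_b hi1 hi2) (lt_ab hi1 hi2)).le

include hs hCs

lemma w_le : wm p q l i ≤ Cs ∧ wp p q l i ≤ Cs := by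
  obtain ⟨h1, h2⟩ := stencil_repr hdet hi1 hi2
  have hsum : p (cpt l i) + q (cpt l i) =
      wm p q l i * (p (cpt l (i - 1)) + q (cpt l (i - 1))) +
      wp p q l i * (p (cpt l (i + 1)) + q (cpt l (i + 1))) := by
    linear_combination h1 + h2
  have hsa := hs _ (mem_a hi1 hi2)
  have hsb := hs _ (mem_b hi1 hi2)
  have hwm := wm_nonneg hdet hi1 hi2
  have hwp := wp_nonneg hdet hi1 hi2
  constructor
  · have hle : wm p q l i * (p (cpt l (i - 1)) + q (cpt l (i - 1))) ≤
        Cs * (p (cpt l (i - 1)) + q (cpt l (i - 1))) := by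
      have := hCs _ (mem_c hi1 hi2) _ (mem_a hi1 hi2)
      nlinarith [mul_nonneg hwp hsb.le]
    exact (mul_le_mul_iff_of_pos_right hsa).mp hle
  · have hle : wp p q l i * (p (cpt l (i + 1)) + q (cpt l (i + 1))) ≤
        Cs * (p (cpt l (i + 1)) + q (cpt l (i + 1))) := by
      have := hCs _ (mem_c hi1 hi2) _ (mem_b hi1 hi2)
      nlinarith [mul_nonneg hwm hsa.le]
    exact (mul_le_mul_iff_of_pos_right hsb).mp hle

end Node

lemma phi1_zero_left {l i : ℕ} {x : ℝ} (h : x ≤ cpt l (i - 1)) :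
    phi1 p q l i x = 0 := by
  have hle : cpt l (i - 1) ≤ cpt l i := cpt_le_cpt (by omega)
  unfold phi1
  rw [if_neg (by rintro ⟨h1, _⟩; linarith), if_neg (by rintro ⟨h1, _⟩; linarith)]

lemma phi1_zero_right {l i : ℕ} {x : ℝ} (h : cpt l (i + 1) ≤ x) :
    phi1 p q l i x = 0 := by
  have hlt : cpt l i < cpt l (i + 1) := cpt_lt_cpt (by omega)
  unfold phi1
  rw [if_neg (by rintro ⟨_, h2⟩; linarith), if_neg (by rintro ⟨_, h2⟩; linarith)]

lemma phi1_supp {l i : ℕ} {x : ℝ} (h : phi1 p q l i x ≠ 0) :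
    cpt l (i - 1) < x ∧ x < cpt l (i + 1) := by
  rcases le_or_gt x (cpt l (i - 1)) with h1 | h1
  · exact absurd (phi1_zero_left h1) h
  rcases lt_or_ge x (cpt l (i + 1)) with h2 | h2
  · exact ⟨h1, h2⟩
  · exact absurd (phi1_zero_right h2) h

lemma phi1_at_zero {l i : ℕ} : phi1 p q l i 0 = 0 :=
  phi1_zero_left (cpt_nonneg _ _)

lemma phi1_at_one {l i : ℕ} (hi2 : i + 1 ≤ 2 ^ l) : phi1 p q l i 1 = 0 :=
  phi1_zero_right (cpt_le_one hi2)

include hdet in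
lemma phi1_node {l i : ℕ} (hi1 : 1 ≤ i) (hi2 : i + 1 ≤ 2 ^ l) :
    phi1 p q l i (cpt l i) = 1 := by
  unfold phi1
  rw [if_pos ⟨lt_ac hi1 hi2, le_refl _⟩]
  exact div_self (Dd_pos hdet (mem_a hi1 hi2) (mem_c hi1 hi2) (lt_ac hi1 hi2)).ne'

include hdet hs hCs hCs1 in
lemma phi1_bounds {l i : ℕ} (hi1 : 1 ≤ i) (hi2 : i + 1 ≤ 2 ^ l)
    {x : ℝ} (hx : x ∈ Icc (0:ℝ) 1) :
    0 ≤ phi1 p q l i x ∧ phi1 p q l i x ≤ Cs := by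
  have ha := mem_a hi1 hi2 (l := l)
  have hc := mem_c hi1 hi2 (l := l)
  have hb := mem_b hi1 hi2 (l := l)
  unfold phi1
  split_ifs with h1 h2
  · have hN : 0 < p x * q (cpt l (i - 1)) - p (cpt l (i - 1)) * q x :=
      hdet _ ha _ hx h1.1
    have hD : 0 < Dd p q (cpt l (i - 1)) (cpt l i) :=
      Dd_pos hdet ha hc (lt_ac hi1 hi2)
    constructor
    · exact div_nonneg hN.le hD.le
    · have hD' := hD; unfold Dd at hD'
      rw [div_le_iff₀ hD']
      have hid : Dd p q (cpt l (i - 1)) (cpt l i) * (p x + q x) =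
          Dd p q x (cpt l i) * (p (cpt l (i - 1)) + q (cpt l (i - 1))) +
          Dd p q (cpt l (i - 1)) x * (p (cpt l i) + q (cpt l i)) := by
        unfold Dd; ring
      have hxc : 0 ≤ Dd p q x (cpt l i) := Dd_nonneg hdet hx hc h1.2
      have key : Dd p q (cpt l (i - 1)) x * (p (cpt l i) + q (cpt l i)) ≤
          (Cs * Dd p q (cpt l (i - 1)) (cpt l i)) * (p (cpt l i) + q (cpt l i)) := by
        have h3 : Dd p q (cpt l (i - 1)) (cpt l i) * (p x + q x) ≤
            Dd p q (cpt l (i - 1)) (cpt l i) * (Cs * (p (cpt l i) + q (cpt l i))) :=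
          mul_le_mul_of_nonneg_left (hCs x hx _ hc) hD.le
        nlinarith [mul_nonneg hxc (hs _ ha).le]
      have := le_of_mul_le_mul_right key (hs _ hc)
      unfold Dd at this
      linarith
  · have hN : 0 < p (cpt l (i + 1)) * q x - p x * q (cpt l (i + 1)) :=
      hdet _ hx _ hb h2.2
    have hD : 0 < Dd p q (cpt l i) (cpt l (i + 1)) :=
      Dd_pos hdet hc hb (lt_cb hi1 hi2)
    constructor
    · exact div_nonneg hN.le hD.le
    · have hD' := hD; unfold Dd at hD'
      rw [div_le_iff₀ hD']
      have hxc : 0 ≤ Dd p q (cpt l i) x := Dd_nonneg hdet hc hx h2.1.le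
      have key : Dd p q x (cpt l (i + 1)) * (p (cpt l i) + q (cpt l i)) ≤
          (Cs * Dd p q (cpt l i) (cpt l (i + 1))) * (p (cpt l i) + q (cpt l i)) := by
        have h3 : Dd p q (cpt l i) (cpt l (i + 1)) * (p x + q x) ≤
            Dd p q (cpt l i) (cpt l (i + 1)) * (Cs * (p (cpt l i) + q (cpt l i))) :=
          mul_le_mul_of_nonneg_left (hCs x hx _ hc) hD.le
        have hid : Dd p q (cpt l i) (cpt l (i + 1)) * (p x + q x) =
            Dd p q x (cpt l (i + 1)) * (p (cpt l i) + q (cpt l i)) +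
            Dd p q (cpt l i) x * (p (cpt l (i + 1)) + q (cpt l (i + 1))) := by
          unfold Dd; ring
        nlinarith [mul_nonneg hxc (hs _ hb).le]
      have := le_of_mul_le_mul_right key (hs _ hc)
      unfold Dd at this
      linarith
  · exact ⟨le_refl 0, le_trans zero_le_one hCs1⟩

include hdet in
lemma phi1_formula_left {l' i' : ℕ} (hi1' : 1 ≤ i') (hi2' : i' + 1 ≤ 2 ^ l')
    {y : ℝ} (hy0 : cpt l' (i' - 1) ≤ y) (hy1 : y ≤ cpt l' i') :
    phi1 p q l' i' y =
      (q (cpt l' (i' - 1)) / Dd p q (cpt l' (i' - 1)) (cpt l' i')) * p y +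
      (-(p (cpt l' (i' - 1))) / Dd p q (cpt l' (i' - 1)) (cpt l' i')) * q y := by
  rcases eq_or_lt_of_le hy0 with rfl | hy0'
  · rw [phi1_zero_left (le_refl _)]
    ring
  · unfold phi1
    rw [if_pos ⟨hy0', hy1⟩]
    unfold Dd
    ring

include hdet in
lemma phi1_formula_right {l' i' : ℕ} (hi1' : 1 ≤ i') (hi2' : i' + 1 ≤ 2 ^ l')
    {y : ℝ} (hy0 : cpt l' i' ≤ y) (hy1 : y ≤ cpt l' (i' + 1)) :
    phi1 p q l' i' y =
      (-(q (cpt l' (i' + 1))) / Dd p q (cpt l' i') (cpt l' (i' + 1))) * p y +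
      (p (cpt l' (i' + 1)) / Dd p q (cpt l' i') (cpt l' (i' + 1))) * q y := by
  rcases eq_or_lt_of_le hy1 with rfl | hy1'
  · rw [phi1_zero_right (le_refl _)]
    ring
  · rcases eq_or_lt_of_le hy0 with rfl | hy0'
    · rw [phi1_node hdet hi1' hi2']
      have hD : 0 < Dd p q (cpt l' i') (cpt l' (i' + 1)) :=
        Dd_pos hdet (mem_c hi1' hi2') (mem_b hi1' hi2') (lt_cb hi1' hi2')
      unfold Dd at *
      rw [div_mul_eq_mul_div, div_mul_eq_mul_div, ← add_div, eq_div_iff hD.ne']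
      ring
    · unfold phi1
      rw [if_neg (by rintro ⟨_, h2⟩; linarith), if_pos ⟨hy0', hy1'⟩]
      unfold Dd
      ring

include hdet in
/-- the three-point stencil at an odd node `(l,i)` annihilates every hat function
except the one at `(l,i)` itself, where it gives `1`. -/
lemma stencil_phi1 {l i l' i' : ℕ}
    (hi1 : 1 ≤ i) (hi2 : i + 1 ≤ 2 ^ l) (hio : Odd i)
    (hi1' : 1 ≤ i') (hi2' : i' + 1 ≤ 2 ^ l') (hio' : Odd i') :
    phi1 p q l' i' (cpt l i)
      - wm p q l i * phi1 p q l' i' (cpt l (i - 1))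
      - wp p q l i * phi1 p q l' i' (cpt l (i + 1))
    = if l' = l ∧ i' = i then 1 else 0 := by
  rcases lt_trichotomy l' l with hlt | rfl | hgt
  · -- coarser level: the hat is a (p,q)-combination on the whole stencil interval
    rw [if_neg (by rintro ⟨rfl, _⟩; omega)]
    have hmono1 : cpt l (i - 1) ≤ cpt l i := cpt_le_cpt (by omega)
    have hmono2 : cpt l i ≤ cpt l (i + 1) := cpt_le_cpt (by omega)
    obtain ⟨α, β, hA, hB, hC⟩ :
        ∃ α β : ℝ,
          phi1 p q l' i' (cpt l (i - 1)) = α * p (cpt l (i - 1)) + β * q (cpt l (i - 1)) ∧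
          phi1 p q l' i' (cpt l i) = α * p (cpt l i) + β * q (cpt l i) ∧
          phi1 p q l' i' (cpt l (i + 1)) = α * p (cpt l (i + 1)) + β * q (cpt l (i + 1)) := by
      rcases dyadic_sep hlt hio (i' - 1) with h0 | h0
      swap
      · exact ⟨0, 0,
          by rw [phi1_zero_left (le_trans (le_trans hmono1 hmono2) h0)]; ring,
          by rw [phi1_zero_left (le_trans hmono2 h0)]; ring,
          by rw [phi1_zero_left h0]; ring⟩
      rcases dyadic_sep hlt hio i' with h1 | h1
      swap
      · exact ⟨_, _,
          phi1_formula_left hdet hi1' hi2' h0 (le_trans hmono1 (le_trans hmono2 h1)),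
          phi1_formula_left hdet hi1' hi2' (le_trans h0 hmono1) (le_trans hmono2 h1),
          phi1_formula_left hdet hi1' hi2' (le_trans h0 (le_trans hmono1 hmono2)) h1⟩
      rcases dyadic_sep hlt hio (i' + 1) with h2 | h2
      · exact ⟨0, 0,
          by rw [phi1_zero_right h2]; ring,
          by rw [phi1_zero_right (le_trans h2 hmono1)]; ring,
          by rw [phi1_zero_right (le_trans h2 (le_trans hmono1 hmono2))]; ring⟩
      · exact ⟨_, _,
          phi1_formula_right hdet hi1' hi2' h1 (le_trans hmono1 (le_trans hmono2 h2)),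
          phi1_formula_right hdet hi1' hi2' (le_trans h1 hmono1) (le_trans hmono2 h2),
          phi1_formula_right hdet hi1' hi2' (le_trans h1 (le_trans hmono1 hmono2)) h2⟩
    rw [hA, hB, hC]
    obtain ⟨hP, hQ⟩ := stencil_repr hdet hi1 hi2
    linear_combination α * hP + β * hQ
  · -- same level
    by_cases hii : i' = i
    · subst hii
      rw [if_pos ⟨rfl, rfl⟩, phi1_node hdet hi1 hi2,
          phi1_zero_left (le_refl _), phi1_zero_right (le_refl _)]
      ring
    · rw [if_neg (by rintro ⟨_, h⟩; exact hii h)]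
      obtain ⟨wi, hwi⟩ := hio
      obtain ⟨wi', hwi'⟩ := hio'
      have hsep : i' + 2 ≤ i ∨ i + 2 ≤ i' := by omega
      rcases hsep with hlt2 | hlt2
      · have k1 : cpt l' (i' + 1) ≤ cpt l' (i - 1) := cpt_le_cpt (by omega)
        rw [phi1_zero_right (le_trans k1 (cpt_le_cpt (by omega) : cpt l' (i-1) ≤ cpt l' i)),
            phi1_zero_right k1,
            phi1_zero_right (le_trans k1 (cpt_le_cpt (by omega) : cpt l' (i-1) ≤ cpt l' (i+1)))]
        ring
      · have k1 : cpt l' (i + 1) ≤ cpt l' (i' - 1) := cpt_le_cpt (by omega)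
        rw [phi1_zero_left (le_trans (cpt_le_cpt (by omega) : cpt l' i ≤ cpt l' (i+1)) k1),
            phi1_zero_left (le_trans (cpt_le_cpt (by omega) : cpt l' (i-1) ≤ cpt l' (i+1)) k1),
            phi1_zero_left k1]
        ring
  · -- finer level: the hat vanishes at all coarser dyadic points
    rw [if_neg (by rintro ⟨rfl, _⟩; omega)]
    have hz : ∀ k : ℕ, phi1 p q l' i' (cpt l k) = 0 := by
      intro k
      rcases dyadic_sep hgt hio' k with h | h
      · exact phi1_zero_left h
      · exact phi1_zero_right h
    rw [hz, hz, hz]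
    ring

end OneDim

section Endpoints

open Filter Topology

lemma endpoint_nonneg {f : ℝ → ℝ} (hc : ContinuousOn f (Icc 0 1))
    (hpos : ∀ x ∈ Ioo (0:ℝ) 1, 0 < f x) : 0 ≤ f 0 ∧ 0 ≤ f 1 := by
  have hne0 : (𝓝[Ioo (0:ℝ) 1] (0:ℝ)).NeBot := by
    rw [← mem_closure_iff_nhdsWithin_neBot, closure_Ioo (by norm_num : (0:ℝ) ≠ 1)]
    exact ⟨le_refl 0, zero_le_one⟩
  have hne1 : (𝓝[Ioo (0:ℝ) 1] (1:ℝ)).NeBot := by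
    rw [← mem_closure_iff_nhdsWithin_neBot, closure_Ioo (by norm_num : (0:ℝ) ≠ 1)]
    exact ⟨zero_le_one, le_refl 1⟩
  constructor
  · have h0 : Tendsto f (𝓝[Ioo (0:ℝ) 1] 0) (𝓝 (f 0)) :=
      (hc 0 ⟨le_refl _, zero_le_one⟩).mono Ioo_subset_Icc_self
    exact ge_of_tendsto h0 (eventually_nhdsWithin_of_forall (fun x hx => (hpos x hx).le))
  · have h1 : Tendsto f (𝓝[Ioo (0:ℝ) 1] 1) (𝓝 (f 1)) :=
      (hc 1 ⟨zero_le_one, le_refl _⟩).mono Ioo_subset_Icc_self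
    exact ge_of_tendsto h1 (eventually_nhdsWithin_of_forall (fun x hx => (hpos x hx).le))

lemma s_pos {p q : ℝ → ℝ} (hcp : ContinuousOn p (Icc 0 1)) (hcq : ContinuousOn q (Icc 0 1))
    (hpp : ∀ x ∈ Ioo (0:ℝ) 1, 0 < p x) (hpq : ∀ x ∈ Ioo (0:ℝ) 1, 0 < q x)
    (hdet : ∀ y ∈ Icc (0:ℝ) 1, ∀ x ∈ Icc (0:ℝ) 1, y < x → 0 < p x * q y - p y * q x) :
    ∀ x ∈ Icc (0:ℝ) 1, 0 < p x + q x := by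
  have hmem : (1/2 : ℝ) ∈ Ioo (0:ℝ) 1 := by norm_num
  have hmem' : (1/2 : ℝ) ∈ Icc (0:ℝ) 1 := by norm_num
  have h0 : (0:ℝ) ∈ Icc (0:ℝ) 1 := ⟨le_refl _, zero_le_one⟩
  have h1 : (1:ℝ) ∈ Icc (0:ℝ) 1 := ⟨zero_le_one, le_refl _⟩
  intro x hx
  rcases eq_or_lt_of_le hx.1 with rfl | hx0
  · have hp0 := (endpoint_nonneg hcp hpp).1
    have hd := hdet 0 h0 (1/2) hmem' (by norm_num)
    have hph := hpp _ hmem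
    have hqh := hpq _ hmem
    nlinarith
  rcases eq_or_lt_of_le hx.2 with rfl | hx1
  · have hq1 := (endpoint_nonneg hcq hpq).2
    have hd := hdet (1/2) hmem' 1 h1 (by norm_num)
    have hph := hpp _ hmem
    have hqh := hpq _ hmem
    nlinarith
  · have := hpp x ⟨hx0, hx1⟩
    have := hpq x ⟨hx0, hx1⟩
    linarith

lemma exists_Cs {p q : ℝ → ℝ} (hcp : ContinuousOn p (Icc 0 1))
    (hcq : ContinuousOn q (Icc 0 1))
    (hspos : ∀ x ∈ Icc (0:ℝ) 1, 0 < p x + q x) :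
    ∃ Cs : ℝ, 1 ≤ Cs ∧
      ∀ x ∈ Icc (0:ℝ) 1, ∀ y ∈ Icc (0:ℝ) 1, p x + q x ≤ Cs * (p y + q y) := by
  have hcs : ContinuousOn (fun x => p x + q x) (Icc 0 1) := hcp.add hcq
  obtain ⟨A, hA, hmin⟩ := isCompact_Icc.exists_isMinOn (Set.nonempty_Icc.mpr zero_le_one) hcs
  obtain ⟨B, hB, hmax⟩ := isCompact_Icc.exists_isMaxOn (Set.nonempty_Icc.mpr zero_le_one) hcs
  have hsA : 0 < p A + q A := hspos A hA
  refine ⟨max 1 ((p B + q B) / (p A + q A)), le_max_left _ _, fun x hx y hy => ?_⟩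
  have h1 : p x + q x ≤ p B + q B := isMaxOn_iff.mp hmax x hx
  have h2 : p A + q A ≤ p y + q y := isMinOn_iff.mp hmin y hy
  have e1 : p B + q B = ((p B + q B) / (p A + q A)) * (p A + q A) := by field_simp
  calc p x + q x ≤ p B + q B := h1
    _ = ((p B + q B) / (p A + q A)) * (p A + q A) := e1
    _ ≤ max 1 ((p B + q B) / (p A + q A)) * (p y + q y) := by
        apply mul_le_mul (le_max_right _ _) h2 hsA.le
        exact le_trans zero_le_one (le_max_left _ _)

end Endpoints

section DDim

variable {d : ℕ}

/-- three-point stencil index shifts. -/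
def sidx (i : ℕ) (e : Fin 3) : ℕ := if e = 0 then i else if e = 1 then i - 1 else i + 1

/-- multi-dimensional stencil point. -/
def spt (l i : Fin d → ℕ) (ε : Fin d → Fin 3) : Fin d → ℝ :=
  fun j => cpt (l j) (sidx (i j) (ε j))

/-- one-dimensional stencil weights. -/
def sw1 (κ : TMKernelSL d) (j : Fin d) (l i : ℕ) (e : Fin 3) : ℝ :=
  if e = 0 then 1 else
  if e = 1 then -(wm (κ.p j) (κ.q j) l i) else -(wp (κ.p j) (κ.q j) l i)

/-- multi-dimensional stencil weight. -/
def swt (κ : TMKernelSL d) (l i : Fin d → ℕ) (ε : Fin d → Fin 3) : ℝ :=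
  ∏ j, sw1 κ j (l j) (i j) (ε j)

/-- admissibility of a level/index pair. -/
def admiss (l i : Fin d → ℕ) : Prop :=
  ∀ j, 1 ≤ i j ∧ i j + 1 ≤ 2 ^ (l j) ∧ Odd (i j)

/-- the tensor stencil extracts the hierarchical coefficient. -/
lemma stencil_phiD (κ : TMKernelSL d) {l i l' i' : Fin d → ℕ}
    (h : admiss l i) (h' : admiss l' i') :
    ∑ ε : Fin d → Fin 3, swt κ l i ε * phiD κ.p κ.q l' i' (spt l i ε)
      = if l' = l ∧ i' = i then 1 else 0 := by
  have key : ∀ ε : Fin d → Fin 3, swt κ l i ε * phiD κ.p κ.q l' i' (spt l i ε)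
      = ∏ j, (sw1 κ j (l j) (i j) (ε j) *
          phi1 (κ.p j) (κ.q j) (l' j) (i' j) (cpt (l j) (sidx (i j) (ε j)))) := by
    intro ε
    rw [Finset.prod_mul_distrib]
    rfl
  simp_rw [key]
  have hps := Fintype.prod_sum (κ := fun _ : Fin d => Fin 3)
    (f := fun j e => sw1 κ j (l j) (i j) e *
      phi1 (κ.p j) (κ.q j) (l' j) (i' j) (cpt (l j) (sidx (i j) e)))
  rw [← hps]
  have hj : ∀ j, (∑ e : Fin 3, sw1 κ j (l j) (i j) e *
        phi1 (κ.p j) (κ.q j) (l' j) (i' j) (cpt (l j) (sidx (i j) e)))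
      = if l' j = l j ∧ i' j = i j then 1 else 0 := by
    intro j
    obtain ⟨ha1, ha2, ha3⟩ := h j
    obtain ⟨hb1, hb2, hb3⟩ := h' j
    have hst := stencil_phi1 (κ.det_pos j) ha1 ha2 ha3 hb1 hb2 hb3
    rw [Fin.sum_univ_three]
    have e0 : sidx (i j) 0 = i j := rfl
    have e1 : sidx (i j) 1 = i j - 1 := rfl
    have e2 : sidx (i j) 2 = i j + 1 := rfl
    have s0 : sw1 κ j (l j) (i j) 0 = 1 := rfl
    have s1 : sw1 κ j (l j) (i j) 1 = -(wm (κ.p j) (κ.q j) (l j) (i j)) := rfl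
    have s2 : sw1 κ j (l j) (i j) 2 = -(wp (κ.p j) (κ.q j) (l j) (i j)) := rfl
    rw [e0, e1, e2, s0, s1, s2, ← hst]
    ring
  calc (∏ j, ∑ e : Fin 3, sw1 κ j (l j) (i j) e *
        phi1 (κ.p j) (κ.q j) (l' j) (i' j) (cpt (l j) (sidx (i j) e)))
      = ∏ j, if l' j = l j ∧ i' j = i j then (1:ℝ) else 0 := by
        exact Finset.prod_congr rfl (fun j _ => hj j)
    _ = if l' = l ∧ i' = i then 1 else 0 := by
        by_cases hc : l' = l ∧ i' = i
        · obtain ⟨rfl, rfl⟩ := hc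
          simp
        · rw [if_neg hc]
          have hex : ∃ j, ¬(l' j = l j ∧ i' j = i j) := by
            by_contra hno
            push_neg at hno
            exact hc ⟨funext fun j => (hno j).1, funext fun j => (hno j).2⟩
          obtain ⟨j, hj'⟩ := hex
          exact Finset.prod_eq_zero (Finset.mem_univ j) (if_neg hj')

/-- total weight of the stencil. -/
lemma swt_abs_sum (κ : TMKernelSL d) {l i : Fin d → ℕ} (h : admiss l i) :
    ∑ ε : Fin d → Fin 3, |swt κ l i ε|
      = ∏ j, (1 + wm (κ.p j) (κ.q j) (l j) (i j) + wp (κ.p j) (κ.q j) (l j) (i j)) := by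
  have key : ∀ ε : Fin d → Fin 3, |swt κ l i ε| = ∏ j, |sw1 κ j (l j) (i j) (ε j)| := by
    intro ε
    exact Finset.abs_prod _ _
  simp_rw [key]
  have hps := Fintype.prod_sum (κ := fun _ : Fin d => Fin 3)
    (f := fun j e => |sw1 κ j (l j) (i j) e|)
  rw [← hps]
  apply Finset.prod_congr rfl
  intro j _
  obtain ⟨ha1, ha2, ha3⟩ := h j
  have hwm := wm_nonneg (κ.det_pos j) ha1 ha2
  have hwp := wp_nonneg (κ.det_pos j) ha1 ha2
  have s0 : sw1 κ j (l j) (i j) 0 = 1 := rfl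
  have s1 : sw1 κ j (l j) (i j) 1 = -(wm (κ.p j) (κ.q j) (l j) (i j)) := rfl
  have s2 : sw1 κ j (l j) (i j) 2 = -(wp (κ.p j) (κ.q j) (l j) (i j)) := rfl
  rw [Fin.sum_univ_three, s0, s1, s2, abs_one, abs_neg, abs_neg,
    abs_of_nonneg hwm, abs_of_nonneg hwp]

end DDim

lemma odd_unique {l i i' : ℕ} {x : ℝ} (hio : Odd i) (hio' : Odd i')
    (h1 : cpt l (i - 1) < x) (h2 : x < cpt l (i + 1))
    (h1' : cpt l (i' - 1) < x) (h2' : x < cpt l (i' + 1)) : i = i' := by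
  have hp : (0:ℝ) < 2 ^ l := by positivity
  have hi1 : 1 ≤ i := hio.pos
  have hi1' : 1 ≤ i' := hio'.pos
  have key : ∀ {k : ℕ}, 1 ≤ k → cpt l (k - 1) < x → x < cpt l (k + 1) →
      (k:ℝ) - 1 < x * 2 ^ l ∧ x * 2 ^ l < (k:ℝ) + 1 := by
    intro k hk hk1 hk2
    unfold cpt at hk1 hk2
    rw [div_lt_iff₀ hp] at hk1
    rw [lt_div_iff₀ hp] at hk2
    have hcast : ((k - 1 : ℕ):ℝ) = (k:ℝ) - 1 := by
      rw [Nat.cast_sub hk]; norm_num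
    rw [hcast] at hk1
    push_cast at hk2
    exact ⟨hk1, hk2⟩
  obtain ⟨c1, c2⟩ := key hi1 h1 h2
  obtain ⟨c1', c2'⟩ := key hi1' h1' h2'
  have r1 : (i:ℝ) < (i':ℝ) + 2 := by linarith
  have r2 : (i':ℝ) < (i:ℝ) + 2 := by linarith
  have n1 : i < i' + 2 := by exact_mod_cast r1
  have n2 : i' < i + 2 := by exact_mod_cast r2
  obtain ⟨w, hw⟩ := hio
  obtain ⟨w', hw'⟩ := hio'
  omega

end HatAux

end

/-- **Lemma EC.4, Ding & Zhang.** For a TM kernel satisfying Assumption SL, any function `g`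
in the span of the hat functions `φ_{l,i}` with `c_{l,i}` in a TSG `X` of size `n` satisfies
`sup_{z ∈ (0,1)^d} |g(z)| ≤ C (log n)^d max_{y ∈ X} |g(y)|`, with `C` depending only on `k`
and `d`.  (The maximum is expressed via an arbitrary upper bound `Bd` of `|g|` on `X`.) -/
theorem hat_span_sup_bound (d : ℕ) (hd : 1 ≤ d) (κ : TMKernelSL d) :
    ∃ C : ℝ, 0 < C ∧
      ∀ n : ℕ, 2 ≤ n → ∀ X : Finset (Fin d → ℝ), X.card = n →
        (∃ τ : ℕ, 1 ≤ τ ∧ (SGset d τ).ncard ≤ n ∧ n < (SGset d (τ + 1)).ncard ∧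
          SGset d τ ⊆ ↑X ∧ ↑X ⊆ SGset d (τ + 1)) →
        ∀ (m : ℕ) (L Idx : Fin m → Fin d → ℕ) (a : Fin m → ℝ),
          (∀ t, (∀ j, 1 ≤ L t j) ∧ Idx t ∈ rho (L t) ∧ cpoint (L t) (Idx t) ∈ X) →
          ∀ Bd : ℝ, (∀ y ∈ X, |∑ t, a t * phiD κ.p κ.q (L t) (Idx t) y| ≤ Bd) →
          ∀ z : Fin d → ℝ, (∀ j, z j ∈ Set.Ioo (0:ℝ) 1) →
            |∑ t, a t * phiD κ.p κ.q (L t) (Idx t) z| ≤ C * Real.log n ^ d * Bd := by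
  classical
  have hspos : ∀ j, ∀ x ∈ Set.Icc (0:ℝ) 1, 0 < κ.p j x + κ.q j x :=
    fun j => HatAux.s_pos (κ.cont_p j) (κ.cont_q j) (κ.pos_p j) (κ.pos_q j) (κ.det_pos j)
  choose Cs hCs1 hCs using fun j => HatAux.exists_Cs (κ.cont_p j) (κ.cont_q j) (hspos j)
  set K : ℝ := ∏ j, (3 * Cs j) with hK
  set Φ : ℝ := ∏ j, Cs j with hΦ
  have hΦ1 : 1 ≤ Φ := by
    rw [hΦ]
    calc (1:ℝ) = ∏ _j : Fin d, 1 := Finset.prod_const_one.symm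
      _ ≤ ∏ j, Cs j := Finset.prod_le_prod (fun _ _ => zero_le_one) (fun j _ => hCs1 j)
  have hK1 : 1 ≤ K := by
    rw [hK]
    calc (1:ℝ) = ∏ _j : Fin d, 1 := Finset.prod_const_one.symm
      _ ≤ ∏ j, 3 * Cs j := Finset.prod_le_prod (fun _ _ => zero_le_one)
          (fun j _ => by nlinarith [hCs1 j])
  have hlog2 : 0 < Real.log 2 := Real.log_pos one_lt_two
  refine ⟨((d + 2 : ℝ) / Real.log 2) ^ d * (K * Φ), ?_, ?_⟩
  · apply mul_pos (pow_pos (div_pos (by positivity) hlog2) d)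
    exact mul_pos (lt_of_lt_of_le one_pos hK1) (lt_of_lt_of_le one_pos hΦ1)
  intro n hn X hX hTSG m L Idx a hT Bd hBd z hz
  obtain ⟨τ, hτ1, -, -, hXlow, hXhigh⟩ := hTSG
  have hadm : ∀ t, HatAux.admiss (L t) (Idx t) := by
    intro t j
    obtain ⟨h1, h2, h3⟩ := hT t
    obtain ⟨ho, hge, hle⟩ := h2 j
    have hpow : 1 ≤ 2 ^ (L t j) := Nat.one_le_two_pow
    exact ⟨hge, by omega, ho⟩
  have hXne : X.Nonempty := Finset.card_pos.mp (by omega)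
  obtain ⟨y0, hy0⟩ := hXne
  have hBd0 : 0 ≤ Bd := le_trans (abs_nonneg _) (hBd y0 hy0)
  set g : (Fin d → ℝ) → ℝ := fun y => ∑ t, a t * phiD κ.p κ.q (L t) (Idx t) y with hg
  have hlev : ∀ t, (∑ j, L t j) ≤ τ + d := by
    intro t
    obtain ⟨hl1, hrho, hmem⟩ := hT t
    obtain ⟨l', hl'1, hl'sum, hl'rep⟩ := hXhigh hmem
    have hle : ∀ j, L t j ≤ l' j := by
      intro j
      obtain ⟨i'', hi''1, hi''2, hi''eq⟩ := hl'rep j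
      exact HatAux.level_le_of_cpt_eq (hrho j).1
        (show cpt (L t j) (Idx t j) = cpt (l' j) i'' from hi''eq)
    calc ∑ j, L t j ≤ ∑ j, l' j := Finset.sum_le_sum (fun j _ => hle j)
      _ ≤ τ + 1 + d - 1 := hl'sum
      _ ≤ τ + d := by omega
  -- coefficient bound via the stencil
  have hcoeff : ∀ t0 : Fin m,
      |∑ t ∈ Finset.univ.filter (fun t => (L t, Idx t) = (L t0, Idx t0)), a t| ≤ K * Bd := by
    intro t0
    have hid : ∑ ε : Fin d → Fin 3,
        HatAux.swt κ (L t0) (Idx t0) ε * g (HatAux.spt (L t0) (Idx t0) ε)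
        = ∑ t ∈ Finset.univ.filter (fun t => (L t, Idx t) = (L t0, Idx t0)), a t := by
      rw [Finset.sum_filter]
      simp only [hg]
      simp_rw [Finset.mul_sum]
      rw [Finset.sum_comm]
      apply Finset.sum_congr rfl
      intro t _
      have hre : ∀ ε : Fin d → Fin 3,
          HatAux.swt κ (L t0) (Idx t0) ε *
            (a t * phiD κ.p κ.q (L t) (Idx t) (HatAux.spt (L t0) (Idx t0) ε))
          = a t * (HatAux.swt κ (L t0) (Idx t0) ε *
              phiD κ.p κ.q (L t) (Idx t) (HatAux.spt (L t0) (Idx t0) ε)) := fun ε => by ring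
      rw [Finset.sum_congr rfl (fun ε _ => hre ε), ← Finset.mul_sum,
        HatAux.stencil_phiD κ (hadm t0) (hadm t)]
      by_cases hc : L t = L t0 ∧ Idx t = Idx t0
      · rw [if_pos hc, if_pos (by rw [hc.1, hc.2]), mul_one]
      · rw [if_neg hc, if_neg (fun hp =>
          hc ⟨congrArg Prod.fst hp, congrArg Prod.snd hp⟩), mul_zero]
    rw [← hid]
    have hgb : ∀ ε : Fin d → Fin 3, |g (HatAux.spt (L t0) (Idx t0) ε)| ≤ Bd := by
      intro ε
      by_cases hbdry : ∃ j, HatAux.sidx (Idx t0 j) (ε j) = 0 ∨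
          HatAux.sidx (Idx t0 j) (ε j) = 2 ^ (L t0 j)
      · obtain ⟨j, hj⟩ := hbdry
        have hzero : g (HatAux.spt (L t0) (Idx t0) ε) = 0 := by
          rw [hg]
          apply Finset.sum_eq_zero
          intro t _
          have hphi : phiD κ.p κ.q (L t) (Idx t) (HatAux.spt (L t0) (Idx t0) ε) = 0 := by
            apply Finset.prod_eq_zero (Finset.mem_univ j)
            obtain ⟨h1, h2, h3⟩ := hadm t j
            rcases hj with hj | hj
            · have hsp : HatAux.spt (L t0) (Idx t0) ε j = 0 := by
                unfold HatAux.spt; rw [hj]; unfold cpt; simp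
              rw [hsp]; exact HatAux.phi1_at_zero
            · have hsp : HatAux.spt (L t0) (Idx t0) ε j = 1 := by
                unfold HatAux.spt; rw [hj]; unfold cpt
                push_cast
                exact div_self (by positivity)
              rw [hsp]; exact HatAux.phi1_at_one h2
          rw [hphi, mul_zero]
        rw [hzero, abs_zero]; exact hBd0
      · push_neg at hbdry
        have hmemX : HatAux.spt (L t0) (Idx t0) ε ∈ X := by
          by_cases hcen : ∀ j, ε j = 0
          · have hsp : HatAux.spt (L t0) (Idx t0) ε = cpoint (L t0) (Idx t0) := by
              funext j; unfold HatAux.spt; rw [hcen j]; rfl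
            rw [hsp]; exact (hT t0).2.2
          · push_neg at hcen
            obtain ⟨j1, hj1⟩ := hcen
            apply hXlow
            have hfin3 : ∀ e : Fin 3, e ≠ 0 → e ≠ 1 → e = 2 := by decide
            have hint : ∀ j, ε j ≠ 0 →
                2 ≤ HatAux.sidx (Idx t0 j) (ε j) ∧
                HatAux.sidx (Idx t0 j) (ε j) ≤ 2 ^ (L t0 j) - 2 ∧
                2 ∣ HatAux.sidx (Idx t0 j) (ε j) ∧ 2 ≤ L t0 j := by
              intro j hej
              obtain ⟨h1, h2, h3⟩ := hadm t0 j
              obtain ⟨w, hw⟩ := h3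
              obtain ⟨hb1, hb2⟩ := hbdry j
              have hl1 : 1 ≤ L t0 j := (hT t0).1 j
              have hdvd2 : 2 ∣ 2 ^ (L t0 j) := dvd_pow_self 2 (by omega)
              have hl2of4 : 4 ≤ 2 ^ (L t0 j) → 2 ≤ L t0 j := by
                intro h4
                by_contra hl
                push_neg at hl
                have : 2 ^ (L t0 j) ≤ 2 ^ 1 := Nat.pow_le_pow_right (by norm_num) (by omega)
                omega
              by_cases he1 : ε j = 1
              · have hs : HatAux.sidx (Idx t0 j) (ε j) = Idx t0 j - 1 := by rw [he1]; rfl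
                rw [hs] at hb1 hb2 ⊢
                have h4 : 4 ≤ 2 ^ (L t0 j) := by omega
                exact ⟨by omega, by omega, ⟨w, by omega⟩, hl2of4 h4⟩
              · have he2 : ε j = 2 := hfin3 _ hej he1
                have hs : HatAux.sidx (Idx t0 j) (ε j) = Idx t0 j + 1 := by rw [he2]; rfl
                rw [hs] at hb1 hb2 ⊢
                have h4 : 4 ≤ 2 ^ (L t0 j) := by omega
                exact ⟨by omega, by omega, ⟨w + 1, by omega⟩, hl2of4 h4⟩
            refine ⟨fun j => if ε j = 0 then L t0 j else L t0 j - 1, fun j => ?_, ?_, fun j => ?_⟩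
            · by_cases hej : ε j = 0
              · simp only [if_pos hej]; exact (hT t0).1 j
              · simp only [if_neg hej]
                have := (hint j hej).2.2.2
                omega
            · have hle2 : ∀ j ∈ Finset.univ,
                  (if ε j = 0 then L t0 j else L t0 j - 1) ≤ L t0 j := by
                intro j _; split_ifs <;> omega
              have hltj : (if ε j1 = 0 then L t0 j1 else L t0 j1 - 1) < L t0 j1 := by
                rw [if_neg hj1]
                have := (hT t0).1 j1
                omega
              have hsum := Finset.sum_lt_sum hle2 ⟨j1, Finset.mem_univ j1, hltj⟩
              have := hlev t0
              show (∑ j, if ε j = 0 then L t0 j else L t0 j - 1) ≤ τ + d - 1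
              omega
            · by_cases hej : ε j = 0
              · refine ⟨Idx t0 j, (hadm t0 j).1, ?_, ?_⟩
                · have h2 := (hadm t0 j).2.1
                  have hpow : 1 ≤ 2 ^ (L t0 j) := Nat.one_le_two_pow
                  simp only [if_pos hej]
                  omega
                · simp only [if_pos hej]
                  unfold HatAux.spt
                  rw [hej]
                  rfl
              · obtain ⟨hg2, hgle, ⟨w2, hw2⟩, hl2⟩ := hint j hej
                have hpow2 : 2 ^ (L t0 j) = 2 * 2 ^ (L t0 j - 1) := by
                  rw [← pow_succ']
                  congr 1
                  omega
                refine ⟨w2, by omega, ?_, ?_⟩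
                · simp only [if_neg hej]
                  omega
                · simp only [if_neg hej]
                  unfold HatAux.spt
                  rw [hw2, HatAux.cpt_halve (by omega)]
        exact hBd _ hmemX
    calc |∑ ε : Fin d → Fin 3,
          HatAux.swt κ (L t0) (Idx t0) ε * g (HatAux.spt (L t0) (Idx t0) ε)|
        ≤ ∑ ε : Fin d → Fin 3,
            |HatAux.swt κ (L t0) (Idx t0) ε * g (HatAux.spt (L t0) (Idx t0) ε)| :=
          Finset.abs_sum_le_sum_abs _ _
      _ = ∑ ε : Fin d → Fin 3,
            |HatAux.swt κ (L t0) (Idx t0) ε| * |g (HatAux.spt (L t0) (Idx t0) ε)| := by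
          simp_rw [abs_mul]
      _ ≤ ∑ ε : Fin d → Fin 3, |HatAux.swt κ (L t0) (Idx t0) ε| * Bd :=
          Finset.sum_le_sum (fun ε _ => mul_le_mul_of_nonneg_left (hgb ε) (abs_nonneg _))
      _ = (∑ ε : Fin d → Fin 3, |HatAux.swt κ (L t0) (Idx t0) ε|) * Bd :=
          (Finset.sum_mul _ _ _).symm
      _ ≤ K * Bd := by
          apply mul_le_mul_of_nonneg_right ?_ hBd0
          rw [HatAux.swt_abs_sum κ (hadm t0), hK]
          apply Finset.prod_le_prod
          · intro j _
            obtain ⟨h1, h2, h3⟩ := hadm t0 j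
            have hwm := HatAux.wm_nonneg (κ.det_pos j) h1 h2
            have hwp := HatAux.wp_nonneg (κ.det_pos j) h1 h2
            linarith
          · intro j _
            obtain ⟨h1, h2, h3⟩ := hadm t0 j
            obtain ⟨hwm, hwp⟩ := HatAux.w_le (κ.det_pos j) (hspos j) (hCs j) h1 h2
            have := hCs1 j
            linarith
  -- regroup the sum over distinct pairs
  set Pset : Finset ((Fin d → ℕ) × (Fin d → ℕ)) :=
    Finset.image (fun t => (L t, Idx t)) Finset.univ with hPset
  have hsplit : g z = ∑ pr ∈ Pset,
      (∑ t ∈ Finset.univ.filter (fun t => (L t, Idx t) = pr), a t) *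
        phiD κ.p κ.q pr.1 pr.2 z := by
    simp only [hg]
    rw [← Finset.sum_fiberwise_of_maps_to (g := fun t => (L t, Idx t))
        (f := fun t => a t * phiD κ.p κ.q (L t) (Idx t) z)
        (fun t _ => Finset.mem_image_of_mem _ (Finset.mem_univ t))]
    apply Finset.sum_congr rfl
    intro pr _
    rw [Finset.sum_mul]
    apply Finset.sum_congr rfl
    intro t ht
    obtain ⟨-, hts⟩ := Finset.mem_filter.mp ht
    rw [← hts]
  set Sup := Pset.filter (fun pr => phiD κ.p κ.q pr.1 pr.2 z ≠ 0) with hSup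
  have h1 : |g z| ≤ ∑ pr ∈ Sup,
      |∑ t ∈ Finset.univ.filter (fun t => (L t, Idx t) = pr), a t| *
        |phiD κ.p κ.q pr.1 pr.2 z| := by
    rw [hsplit, ← Finset.sum_filter_of_ne (fun pr _ hne => right_ne_zero_of_mul hne)]
    exact le_trans (Finset.abs_sum_le_sum_abs _ _)
      (le_of_eq (Finset.sum_congr rfl (fun pr _ => abs_mul _ _)))
  have hterm : ∀ pr ∈ Sup,
      |∑ t ∈ Finset.univ.filter (fun t => (L t, Idx t) = pr), a t| *
        |phiD κ.p κ.q pr.1 pr.2 z| ≤ (K * Bd) * Φ := by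
    intro pr hpr
    obtain ⟨hprP, hprne⟩ := Finset.mem_filter.mp hpr
    obtain ⟨t0, -, ht0⟩ := Finset.mem_image.mp hprP
    subst ht0
    apply mul_le_mul (hcoeff t0) ?_ (abs_nonneg _) (mul_nonneg (by linarith) hBd0)
    rw [phiD, Finset.abs_prod, hΦ]
    apply Finset.prod_le_prod (fun j _ => abs_nonneg _)
    intro j _
    obtain ⟨ha1, ha2, ha3⟩ := hadm t0 j
    obtain ⟨hb0, hb1'⟩ := HatAux.phi1_bounds (κ.det_pos j) (hspos j) (hCs j) (hCs1 j) ha1 ha2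
      ⟨(hz j).1.le, (hz j).2.le⟩
    rw [abs_of_nonneg hb0]
    exact hb1'
  -- cardinality of the support set
  have hcard : Sup.card ≤ (τ + d) ^ d := by
    have hmaps : ∀ pr ∈ Sup,
        pr.1 ∈ Fintype.piFinset (fun _ : Fin d => Finset.Icc 1 (τ + d)) := by
      intro pr hpr
      obtain ⟨hprP, -⟩ := Finset.mem_filter.mp hpr
      obtain ⟨t0, -, ht0⟩ := Finset.mem_image.mp hprP
      subst ht0
      rw [Fintype.mem_piFinset]
      intro j
      rw [Finset.mem_Icc]
      refine ⟨(hT t0).1 j, ?_⟩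
      calc L t0 j ≤ ∑ j', L t0 j' :=
          Finset.single_le_sum (fun _ _ => Nat.zero_le _) (Finset.mem_univ j)
        _ ≤ τ + d := hlev t0
    have hinj : Set.InjOn (fun pr : (Fin d → ℕ) × (Fin d → ℕ) => pr.1) Sup := by
      intro pr hpr pr' hpr' he
      have h1' := Finset.mem_filter.mp (Finset.mem_coe.mp hpr)
      have h2' := Finset.mem_filter.mp (Finset.mem_coe.mp hpr')
      obtain ⟨t0, -, ht0⟩ := Finset.mem_image.mp h1'.1
      obtain ⟨t1, -, ht1⟩ := Finset.mem_image.mp h2'.1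
      have hodd1 : ∀ j, Odd (pr.2 j) := by
        intro j; rw [← ht0]; exact (hadm t0 j).2.2
      have hodd2 : ∀ j, Odd (pr'.2 j) := by
        intro j; rw [← ht1]; exact (hadm t1 j).2.2
      have hsupp1 : ∀ j, phi1 (κ.p j) (κ.q j) (pr.1 j) (pr.2 j) (z j) ≠ 0 := by
        intro j
        exact Finset.prod_ne_zero_iff.mp h1'.2 j (Finset.mem_univ j)
      have hsupp2 : ∀ j, phi1 (κ.p j) (κ.q j) (pr'.1 j) (pr'.2 j) (z j) ≠ 0 := by
        intro j
        exact Finset.prod_ne_zero_iff.mp h2'.2 j (Finset.mem_univ j)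
      have hsnd : pr.2 = pr'.2 := by
        funext j
        obtain ⟨s1a, s1b⟩ := HatAux.phi1_supp (hsupp1 j)
        obtain ⟨s2a, s2b⟩ := HatAux.phi1_supp (hsupp2 j)
        have hejl : pr'.1 j = pr.1 j := (congrFun he j).symm
        rw [hejl] at s2a s2b
        exact HatAux.odd_unique (hodd1 j) (hodd2 j) s1a s1b s2a s2b
      exact Prod.ext he hsnd
    calc Sup.card ≤ (Fintype.piFinset (fun _ : Fin d => Finset.Icc 1 (τ + d))).card :=
        Finset.card_le_card_of_injOn _ hmaps hinj
      _ = (τ + d) ^ d := by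
          rw [Fintype.card_piFinset]
          simp [Nat.card_Icc]
  -- τ is logarithmic in n
  have hτn : 2 ^ τ - 1 ≤ n := by
    rw [← hX]
    have hcardle : (Finset.range (2 ^ τ - 1)).card ≤ X.card := by
      apply Finset.card_le_card_of_injOn
        (fun k => fun j : Fin d => if j = ⟨0, hd⟩ then cpt τ (k + 1) else cpt 1 1)
      · intro k hk
        refine Finset.mem_coe.mp (hXlow ?_)
        refine ⟨fun j => if j = ⟨0, hd⟩ then τ else 1, fun j => ?_, ?_, fun j => ?_⟩
        · beta_reduce
          split_ifs <;> omega
        · have hre : ∀ j : Fin d, (if j = ⟨0, hd⟩ then τ else 1)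
              = 1 + (if j = ⟨0, hd⟩ then τ - 1 else 0) := by
            intro j; split_ifs <;> omega
          beta_reduce
          rw [Finset.sum_congr rfl (fun j _ => hre j), Finset.sum_add_distrib,
            Finset.sum_const, Finset.sum_ite_eq' Finset.univ (⟨0, hd⟩ : Fin d) (fun _ => τ - 1)]
          simp only [Finset.card_univ, Fintype.card_fin, smul_eq_mul, mul_one,
            Finset.mem_univ, if_true]
          omega
        · beta_reduce
          by_cases hj : j = ⟨0, hd⟩
          · refine ⟨k + 1, by omega, ?_, ?_⟩
            · simp only [if_pos hj]
              have := Finset.mem_range.mp hk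
              omega
            · simp only [if_pos hj]
          · refine ⟨1, le_refl 1, ?_, ?_⟩
            · simp only [if_neg hj]
              norm_num
            · simp only [if_neg hj]
      · intro k1 h1' k2 h2' he
        have hce := congrFun he ⟨0, hd⟩
        simp only [if_pos rfl] at hce
        have := HatAux.cpt_inj hce
        omega
    rw [Finset.card_range] at hcardle
    exact hcardle
  have hτlog : (τ:ℝ) + d ≤ ((d:ℝ) + 2) / Real.log 2 * Real.log n := by
    have h2n : (2:ℝ) ^ τ ≤ 2 * n := by
      have hpow : 1 ≤ 2 ^ τ := Nat.one_le_two_pow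
      have : (2:ℕ) ^ τ ≤ 2 * n := by omega
      exact_mod_cast this
    have hlogle : Real.log ((2:ℝ) ^ τ) ≤ Real.log (2 * n) :=
      Real.log_le_log (by positivity) h2n
    rw [Real.log_pow, Real.log_mul (by norm_num)
      (Nat.cast_ne_zero.mpr (by omega))] at hlogle
    have hRn : Real.log 2 ≤ Real.log n := by
      apply Real.log_le_log (by norm_num)
      exact_mod_cast hn
    have hd1 : (1:ℝ) ≤ d := by exact_mod_cast hd
    rw [div_mul_eq_mul_div, le_div_iff₀ hlog2]
    nlinarith [mul_le_mul_of_nonneg_left hRn (by positivity : (0:ℝ) ≤ (d:ℝ))]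
  -- final chain
  have hnn : (0:ℝ) ≤ (K * Bd) * Φ := mul_nonneg (mul_nonneg (by linarith) hBd0) (by linarith)
  show |g z| ≤ _
  calc |g z| ≤ ∑ pr ∈ Sup,
        |∑ t ∈ Finset.univ.filter (fun t => (L t, Idx t) = pr), a t| *
          |phiD κ.p κ.q pr.1 pr.2 z| := h1
    _ ≤ ∑ _pr ∈ Sup, (K * Bd) * Φ := Finset.sum_le_sum hterm
    _ = Sup.card * ((K * Bd) * Φ) := by rw [Finset.sum_const, nsmul_eq_mul]
    _ ≤ (((τ + d) ^ d : ℕ) : ℝ) * ((K * Bd) * Φ) := by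
        apply mul_le_mul_of_nonneg_right ?_ hnn
        exact_mod_cast hcard
    _ ≤ (((d:ℝ) + 2) / Real.log 2 * Real.log n) ^ d * ((K * Bd) * Φ) := by
        apply mul_le_mul_of_nonneg_right ?_ hnn
        push_cast
        exact pow_le_pow_left₀ (by positivity) hτlog d
    _ = ((d + 2 : ℝ) / Real.log 2) ^ d * (K * Φ) * Real.log ↑n ^ d * Bd := by
        rw [mul_pow]
        ring
end
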